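/- arXiv:2605.28207 — 8 statements merged into one kernel-verified Lean document; each statement's English description precedes it below -/
import Mathlib

section
/- Let K be an E-by-E real symmetric positive semidefinite matrix, λ > 0, and F̃(S) = log det(I + λ⁻¹ K_S). Then F̃ is submodular: for all subsets S ⊆ T ⊆ {1,...,E} and every e ∉ T, F̃(S ∪ {e}) − F̃(S) ≥ F̃(T ∪ {e}) − F̃(T). -/
set_option linter.unusedSectionVars false
set_option maxHeartbeats 1000000

open Matrix Finset

/-- Principal submatrix of `K` indexed by a finite set `S`. -/
noncomputable def subK {E : ℕ} (K : Matrix (Fin E) (Fin E) ℝ) (S : Finset (Fin E)) :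
    Matrix {x // x ∈ S} {x // x ∈ S} ℝ :=
  K.submatrix (fun i => i.1) (fun j => j.1)

/-- `F̃(S) = log det (I + λ⁻¹ K_S)` (equal to `0` when `S = ∅`). -/
noncomputable def Ftil {E : ℕ} (K : Matrix (Fin E) (Fin E) ℝ) (lam : ℝ)
    (S : Finset (Fin E)) : ℝ :=
  Real.log (1 + lam⁻¹ • subK K S).det


variable {m n : Type*} [Fintype m] [Fintype n] [DecidableEq m] [DecidableEq n]

/-- extension of a vector by zero along an (injective) map -/
noncomputable def extV (f : m → n) (x : m → ℝ) : n → ℝ :=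
  fun i => ∑ j, if i = f j then x j else 0

lemma extV_apply (f : m → n) (hf : Function.Injective f) (x : m → ℝ) (j : m) :
    extV f x (f j) = x j := by
  unfold extV
  rw [Finset.sum_eq_single j]
  · simp
  · intro b _ hb
    rw [if_neg (fun h => hb (hf h.symm))]
  · simp

lemma sum_extV_mul (f : m → n) (hf : Function.Injective f) (x : m → ℝ) (g : n → ℝ) :
    ∑ i, extV f x i * g i = ∑ j, x j * g (f j) := by
  unfold extV
  simp only [Finset.sum_mul]
  rw [Finset.sum_comm]
  refine Finset.sum_congr rfl fun j _ => ?_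
  rw [Finset.sum_eq_single (f j)]
  · simp
  · intro b _ hb; rw [if_neg hb, zero_mul]
  · simp

lemma extV_ne_zero (f : m → n) (hf : Function.Injective f) {x : m → ℝ} (hx : x ≠ 0) :
    extV f x ≠ 0 := by
  obtain ⟨j, hj⟩ := Function.ne_iff.mp hx
  intro h
  apply hj
  have := congrFun h (f j)
  rwa [extV_apply f hf] at this

lemma mulVec_extV (M : Matrix n n ℝ) (f : m → n) (hf : Function.Injective f)
    (x : m → ℝ) (i : n) :
    (M *ᵥ extV f x) i = ∑ j, M i (f j) * x j := by
  unfold mulVec dotProduct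
  calc ∑ k, M i k * extV f x k = ∑ k, extV f x k * M i k := by
        simp [mul_comm]
    _ = ∑ j, x j * M i (f j) := sum_extV_mul f hf x _
    _ = ∑ j, M i (f j) * x j := by simp [mul_comm]

lemma dot_extV_mulVec (M : Matrix n n ℝ) (f : m → n) (hf : Function.Injective f)
    (x : m → ℝ) :
    extV f x ⬝ᵥ (M *ᵥ extV f x) = x ⬝ᵥ ((M.submatrix f f) *ᵥ x) := by
  unfold dotProduct
  rw [sum_extV_mul f hf]
  refine Finset.sum_congr rfl fun j _ => ?_
  rw [mulVec_extV M f hf]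
  simp [mulVec, dotProduct, submatrix_apply]

lemma dot_extV (f : m → n) (hf : Function.Injective f) (x : m → ℝ) (g : n → ℝ) :
    g ⬝ᵥ extV f x = (fun j => g (f j)) ⬝ᵥ x := by
  unfold dotProduct
  calc ∑ i, g i * extV f x i = ∑ i, extV f x i * g i :=
        Finset.sum_congr rfl fun i _ => mul_comm _ _
    _ = ∑ j, x j * g (f j) := sum_extV_mul f hf x g
    _ = ∑ j, g (f j) * x j := Finset.sum_congr rfl fun i _ => mul_comm _ _

/-- submatrix of a positive definite matrix along an injective map is positive definite -/
lemma PosDef.submatrix_inj {M : Matrix n n ℝ} (hM : M.PosDef) (f : m → n)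
    (hf : Function.Injective f) : (M.submatrix f f).PosDef := by
  refine PosDef.of_dotProduct_mulVec_pos ?_ ?_
  · show (M.submatrix f f)ᴴ = M.submatrix f f
    rw [conjTranspose_submatrix, hM.1]
  · intro x hx
    have := hM.dotProduct_mulVec_pos (extV_ne_zero f hf hx)
    rwa [star_trivial, dot_extV_mulVec M f hf x, ← star_trivial x] at this

/-- Variational lower bound: for `A` positive definite,
`v ⬝ A v + 2 b⬝v ≥ -(b ⬝ A⁻¹ b)`. -/
lemma quad_min {A : Matrix m m ℝ} (hA : A.PosDef) (b v : m → ℝ) :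
    -(b ⬝ᵥ (A⁻¹ *ᵥ b)) ≤ v ⬝ᵥ (A *ᵥ v) + 2 * (b ⬝ᵥ v) := by
  have hdet : IsUnit A.det := isUnit_iff_ne_zero.mpr hA.det_pos.ne'
  have hAAinv : A * A⁻¹ = 1 := mul_nonsing_inv A hdet
  set w := v + A⁻¹ *ᵥ b with hw
  have h0 : 0 ≤ w ⬝ᵥ (A *ᵥ w) := by
    have := hA.posSemidef.dotProduct_mulVec_nonneg w
    rwa [star_trivial] at this
  have hAw : A *ᵥ w = A *ᵥ v + b := by
    rw [hw, mulVec_add, mulVec_mulVec, hAAinv, one_mulVec]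
  have hsymm : Aᵀ = A := hA.1
  have key : w ⬝ᵥ (A *ᵥ w) = v ⬝ᵥ (A *ᵥ v) + 2 * (b ⬝ᵥ v) + b ⬝ᵥ (A⁻¹ *ᵥ b) := by
    rw [hAw, hw]
    rw [add_dotProduct, dotProduct_add, dotProduct_add]
    have h1 : (A⁻¹ *ᵥ b) ⬝ᵥ (A *ᵥ v) = b ⬝ᵥ v := by
      have hv : (A⁻¹ *ᵥ b) ᵥ* A = b := by
        have : (A⁻¹ *ᵥ b) ᵥ* (Aᵀ)ᵀ = Aᵀ *ᵥ (A⁻¹ *ᵥ b) := vecMul_transpose _ _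
        rw [transpose_transpose, hsymm] at this
        rw [this, mulVec_mulVec, hAAinv, one_mulVec]
      rw [dotProduct_mulVec, hv]
    have h2 : (A⁻¹ *ᵥ b) ⬝ᵥ b = b ⬝ᵥ (A⁻¹ *ᵥ b) := dotProduct_comm _ _
    have h3 : v ⬝ᵥ b = b ⬝ᵥ v := dotProduct_comm _ _
    rw [h1, h2, h3]; ring
  linarith [h0, key.symm.le]

noncomputable def subK' {E : ℕ} (K : Matrix (Fin E) (Fin E) ℝ) (S : Finset (Fin E)) :
    Matrix {x // x ∈ S} {x // x ∈ S} ℝ :=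
  K.submatrix (fun i => i.1) (fun j => j.1)

section Schur

variable {E : ℕ} (N : Matrix (Fin E) (Fin E) ℝ)

/-- the vector `b_U = (N i e)_{i ∈ U}` -/
def bv (U : Finset (Fin E)) (e : Fin E) : {x // x ∈ U} → ℝ := fun i => N i.1 e

/-- `q_U = b_U ⬝ (N_U)⁻¹ b_U` -/
noncomputable def qv (U : Finset (Fin E)) (e : Fin E) : ℝ :=
  bv N U e ⬝ᵥ ((subK' N U)⁻¹ *ᵥ bv N U e)

noncomputable def insEquiv (U : Finset (Fin E)) (e : Fin E) (he : e ∉ U) :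
    {x // x ∈ U} ⊕ Unit ≃ {x // x ∈ insert e U} where
  toFun := Sum.elim (fun i => ⟨i.1, mem_insert_of_mem i.2⟩) (fun _ => ⟨e, mem_insert_self e U⟩)
  invFun := fun i => if h : i.1 ∈ U then Sum.inl ⟨i.1, h⟩ else Sum.inr ()
  left_inv := by
    rintro (⟨x, hx⟩ | ⟨⟩)
    · simp [hx]
    · simp [he]
  right_inv := by
    rintro ⟨x, hx⟩
    by_cases h : x ∈ U
    · simp [h]
    · have hxe : x = e := by
        rcases Finset.mem_insert.mp hx with h' | h'
        · exact h'
        · exact absurd h' h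
      subst hxe
      simp [he]

lemma subK'_posDef (hN : N.PosDef) (U : Finset (Fin E)) : (subK' N U).PosDef :=
  PosDef.submatrix_inj hN _ Subtype.val_injective

lemma N_symm (hN : N.PosDef) (i j : Fin E) : N i j = N j i := by
  have := congrFun (congrFun hN.1 i) j
  rw [conjTranspose_apply, star_trivial] at this
  exact this.symm

lemma det_insert (hN : N.PosDef) (U : Finset (Fin E)) (e : Fin E) (he : e ∉ U) :
    (subK' N (insert e U)).det = (subK' N U).det * (N e e - qv N U e) := by
  classical
  set σ := insEquiv U e he
  set A := subK' N U
  set B : Matrix {x // x ∈ U} Unit ℝ := Matrix.of fun i _ => N i.1 e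
  set C : Matrix Unit {x // x ∈ U} ℝ := Matrix.of fun _ j => N e j.1
  set D : Matrix Unit Unit ℝ := Matrix.of fun _ _ => N e e
  have hblock : (subK' N (insert e U)).submatrix σ σ = fromBlocks A B C D := by
    ext i j
    rcases i with i | ⟨⟩ <;> rcases j with j | ⟨⟩ <;> rfl
  have hA : A.PosDef := subK'_posDef N hN U
  have : Invertible A := A.invertibleOfIsUnitDet (isUnit_iff_ne_zero.mpr hA.det_pos.ne')
  have hdet : (subK' N (insert e U)).det = A.det * Matrix.det (D - C * ⅟A * B) := by
    rw [← det_submatrix_equiv_self σ, hblock, det_fromBlocks₁₁]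
  rw [hdet, invOf_eq_nonsing_inv]
  congr 1
  rw [det_unique]
  show D () () - (C * A⁻¹ * B) () () = N e e - qv N U e
  congr 1
  show (C * A⁻¹ * B) () () = bv N U e ⬝ᵥ (A⁻¹ *ᵥ bv N U e)
  simp only [Matrix.mul_apply, Finset.sum_mul, dotProduct, mulVec, Finset.mul_sum]
  rw [Finset.sum_comm]
  refine Finset.sum_congr rfl fun i _ => Finset.sum_congr rfl fun j _ => ?_
  show C () i * A⁻¹ i j * B j () = bv N U e i * (A⁻¹ i j * bv N U e j)
  have hC : C () i = bv N U e i := N_symm N hN e i.1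
  have hB : B j () = bv N U e j := rfl
  rw [hC, hB, mul_assoc]

lemma schur_pos (hN : N.PosDef) (U : Finset (Fin E)) (e : Fin E) (he : e ∉ U) :
    0 < N e e - qv N U e := by
  have h1 := (subK'_posDef N hN (insert e U)).det_pos
  have h2 := (subK'_posDef N hN U).det_pos
  rw [det_insert N hN U e he] at h1
  nlinarith [h1, h2]

lemma qv_mono (hN : N.PosDef) (S T : Finset (Fin E)) (hST : S ⊆ T) (e : Fin E) :
    qv N S e ≤ qv N T e := by
  classical
  set f : {x // x ∈ S} → {x // x ∈ T} := fun i => ⟨i.1, hST i.2⟩ with hf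
  have hfinj : Function.Injective f := by
    intro a b hab
    have h := congrArg Subtype.val hab
    exact Subtype.ext h
  have hAS : (subK' N T).submatrix f f = subK' N S := rfl
  have hbS : (fun j => bv N T e (f j)) = bv N S e := rfl
  have hASpd : (subK' N S).PosDef := subK'_posDef N hN S
  have hATpd : (subK' N T).PosDef := subK'_posDef N hN T
  have hdet : IsUnit (subK' N S).det := isUnit_iff_ne_zero.mpr hASpd.det_pos.ne'
  set bS := bv N S e
  set vS : {x // x ∈ S} → ℝ := -((subK' N S)⁻¹ *ᵥ bS) with hvS
  have key := quad_min hATpd (bv N T e) (extV f vS)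
  rw [dot_extV_mulVec _ f hfinj, dot_extV f hfinj, hAS, hbS] at key
  have h1 : subK' N S *ᵥ vS = -bS := by
    rw [hvS, mulVec_neg, mulVec_mulVec, mul_nonsing_inv _ hdet, one_mulVec]
  have h2 : vS ⬝ᵥ (subK' N S *ᵥ vS) = qv N S e := by
    rw [h1, hvS, dotProduct_neg, neg_dotProduct, neg_neg, dotProduct_comm]
    rfl
  have h3 : bS ⬝ᵥ vS = -(qv N S e) := by
    rw [hvS, dotProduct_neg]
    rfl
  have hq : bv N T e ⬝ᵥ ((subK' N T)⁻¹ *ᵥ bv N T e) = qv N T e := rfl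
  rw [h2, h3, hq] at key
  linarith

lemma log_marginal (hN : N.PosDef) (U : Finset (Fin E)) (e : Fin E) (he : e ∉ U) :
    Real.log (subK' N (insert e U)).det - Real.log (subK' N U).det
      = Real.log (N e e - qv N U e) := by
  rw [det_insert N hN U e he,
    Real.log_mul (subK'_posDef N hN U).det_pos.ne' (schur_pos N hN U e he).ne']
  ring

end Schur


lemma posSemidef_smul {E : ℕ} {K : Matrix (Fin E) (Fin E) ℝ} (hK : K.PosSemidef)
    {c : ℝ} (hc : 0 ≤ c) : (c • K).PosSemidef := by
  refine PosSemidef.of_dotProduct_mulVec_nonneg ?_ ?_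
  · show (c • K)ᴴ = c • K
    rw [conjTranspose_smul, star_trivial, hK.1]
  · intro x
    rw [smul_mulVec, dotProduct_smul, smul_eq_mul]
    exact mul_nonneg hc (hK.dotProduct_mulVec_nonneg x)

lemma Ftil_eq {E : ℕ} (K : Matrix (Fin E) (Fin E) ℝ) (lam : ℝ) (S : Finset (Fin E)) :
    Ftil K lam S = Real.log (subK' (1 + lam⁻¹ • K) S).det := by
  unfold Ftil
  congr 1
  congr 1
  ext i j
  simp only [Matrix.add_apply, Matrix.smul_apply, Matrix.one_apply, smul_eq_mul,
    subK, subK', submatrix_apply]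
  congr 1
  exact if_congr Subtype.ext_iff rfl rfl


/-- For a real symmetric positive semidefinite matrix `K` and `λ > 0`,
the set function `F̃(S) = log det(I + λ⁻¹ K_S)` is submodular: for all `S ⊆ T` and `e ∉ T`,
`F̃(S ∪ {e}) − F̃(S) ≥ F̃(T ∪ {e}) − F̃(T)`. -/
theorem Ftil_submodular {E : ℕ} (K : Matrix (Fin E) (Fin E) ℝ) (hK : K.PosSemidef)
    (lam : ℝ) (hlam : 0 < lam) (S T : Finset (Fin E)) (hST : S ⊆ T)
    (e : Fin E) (he : e ∉ T) :
    Ftil K lam (insert e T) - Ftil K lam T ≤ Ftil K lam (insert e S) - Ftil K lam S := by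
  classical
  set N : Matrix (Fin E) (Fin E) ℝ := 1 + lam⁻¹ • K with hNdef
  have hN : N.PosDef :=
    Matrix.PosDef.add_posSemidef Matrix.PosDef.one
      (posSemidef_smul hK (le_of_lt (inv_pos.mpr hlam)))
  have heS : e ∉ S := fun h => he (hST h)
  rw [Ftil_eq, Ftil_eq, Ftil_eq, Ftil_eq,
    log_marginal N hN T e he, log_marginal N hN S e heS]
  exact Real.log_le_log (schur_pos N hN T e he)
    (by linarith [qv_mono N hN S T hST e])
end

section
/- Let K be an E-by-E real symmetric positive semidefinite matrix and λ > 0. For S ⊆ {1,...,E} let A_S = K_S + λ I. Then for all subsets S ⊆ T ⊆ {1,...,E} and every e ∉ T, the quadratic form K_{eT} A_T⁻¹ K_{Te} is at least K_{eS} A_S⁻¹ K_{Se}; equivalently, the Schur complement σ_e(T) = K_ee + λ − K_{eT} A_T⁻¹ K_{Te} satisfies σ_e(T) ≤ σ_e(S). -/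
open Matrix Finset

/-- The matrix `A_S = K_S + λ I` is positive definite. -/
lemma subK_posDef {E : ℕ} (K : Matrix (Fin E) (Fin E) ℝ) (hK : K.PosSemidef)
    (lam : ℝ) (hlam : 0 < lam) (S : Finset (Fin E)) :
    (subK K S + lam • (1 : Matrix {x // x ∈ S} {x // x ∈ S} ℝ)).PosDef := by
  refine Matrix.PosDef.posSemidef_add (hK.submatrix _) ?_
  rw [Matrix.smul_one_eq_diagonal]
  exact Matrix.posDef_diagonal_iff.2 fun _ => hlam

/-- Key variational inequality: for positive definite `A`,
`2 ⟨z, b⟩ - ⟨z, A z⟩ ≤ ⟨b, A⁻¹ b⟩`. -/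
lemma quad_le {n : Type*} [Fintype n] [DecidableEq n] {A : Matrix n n ℝ} (hA : A.PosDef)
    (b z : n → ℝ) : 2 * (z ⬝ᵥ b) - z ⬝ᵥ (A *ᵥ z) ≤ b ⬝ᵥ (A⁻¹ *ᵥ b) := by
  have hdet : IsUnit A.det := hA.det_pos.ne'.isUnit
  have hsym : Aᵀ = A := by
    have h := hA.isHermitian.eq
    rwa [Matrix.conjTranspose_eq_transpose_of_trivial] at h
  set c := A⁻¹ *ᵥ b with hc
  have hAc : A *ᵥ c = b := by
    rw [hc, Matrix.mulVec_mulVec, Matrix.mul_nonsing_inv _ hdet, Matrix.one_mulVec]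
  have h1 : c ⬝ᵥ (A *ᵥ z) = z ⬝ᵥ b := by
    rw [Matrix.dotProduct_mulVec]
    have : c ᵥ* A = b := by rw [← hsym, Matrix.vecMul_transpose, hAc]
    rw [this, dotProduct_comm]
  have h2 : z ⬝ᵥ (A *ᵥ c) = z ⬝ᵥ b := by rw [hAc]
  have h3 : c ⬝ᵥ (A *ᵥ c) = b ⬝ᵥ c := by rw [hAc, dotProduct_comm]
  have hpos : 0 ≤ (z - c) ⬝ᵥ (A *ᵥ (z - c)) := by
    have := hA.posSemidef.dotProduct_mulVec_nonneg (z - c)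
    simpa using this
  have hexp : (z - c) ⬝ᵥ (A *ᵥ (z - c)) =
      z ⬝ᵥ (A *ᵥ z) - z ⬝ᵥ (A *ᵥ c) - (c ⬝ᵥ (A *ᵥ z) - c ⬝ᵥ (A *ᵥ c)) := by
    rw [Matrix.mulVec_sub, sub_dotProduct, dotProduct_sub,
      dotProduct_sub]
  rw [hexp, h1, h2, h3] at hpos
  have : b ⬝ᵥ c = b ⬝ᵥ (A⁻¹ *ᵥ b) := by rw [hc]
  linarith

/-- For `K` real symmetric positive semidefinite, `λ > 0`, `A_S = K_S + λI`,
subsets `S ⊆ T` and `e ∉ T`, the quadratic form `K_{eT} A_T⁻¹ K_{Te}` is at least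
`K_{eS} A_S⁻¹ K_{Se}`; equivalently the Schur complements satisfy `σ_e(T) ≤ σ_e(S)`. -/
theorem schur_complement_antitone {E : ℕ} (K : Matrix (Fin E) (Fin E) ℝ) (hK : K.PosSemidef)
    (lam : ℝ) (hlam : 0 < lam) (S T : Finset (Fin E)) (hST : S ⊆ T)
    (e : Fin E) (he : e ∉ T) :
    ((fun j : {x // x ∈ S} => K e j.1) ⬝ᵥ
        ((subK K S + lam • 1)⁻¹ *ᵥ fun j : {x // x ∈ S} => K e j.1) ≤
      (fun j : {x // x ∈ T} => K e j.1) ⬝ᵥ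
        ((subK K T + lam • 1)⁻¹ *ᵥ fun j : {x // x ∈ T} => K e j.1)) ∧
      (K e e + lam -
          (fun j : {x // x ∈ T} => K e j.1) ⬝ᵥ
            ((subK K T + lam • 1)⁻¹ *ᵥ fun j : {x // x ∈ T} => K e j.1) ≤
        K e e + lam -
          (fun j : {x // x ∈ S} => K e j.1) ⬝ᵥ
            ((subK K S + lam • 1)⁻¹ *ᵥ fun j : {x // x ∈ S} => K e j.1)) := by
  classical
  have hASpd := subK_posDef K hK lam hlam S
  have hATpd := subK_posDef K hK lam hlam T
  set bS : {x // x ∈ S} → ℝ := fun j => K e j.1 with hbS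
  set bT : {x // x ∈ T} → ℝ := fun j => K e j.1 with hbT
  set AS := subK K S + lam • (1 : Matrix {x // x ∈ S} {x // x ∈ S} ℝ) with hAS
  set AT := subK K T + lam • (1 : Matrix {x // x ∈ T} {x // x ∈ T} ℝ) with hAT
  -- optimal vector on S, extended by zero to T
  set zS : {x // x ∈ S} → ℝ := AS⁻¹ *ᵥ bS with hzS
  set h : Fin E → ℝ := fun i => if hi : i ∈ S then zS ⟨i, hi⟩ else 0 with hh
  set zT : {x // x ∈ T} → ℝ := fun j => h j.1 with hzT
  have hzSh : zS = fun j : {x // x ∈ S} => h j.1 := by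
    funext j
    simp [hh]
  -- A_S zS = bS
  have hdetS : IsUnit AS.det := hASpd.det_pos.ne'.isUnit
  have hASzS : AS *ᵥ zS = bS := by
    rw [hzS, Matrix.mulVec_mulVec, Matrix.mul_nonsing_inv _ hdetS, Matrix.one_mulVec]
  -- entries formula
  have entry : ∀ (U : Finset (Fin E)) (i j : {x // x ∈ U}),
      (subK K U + lam • (1 : Matrix {x // x ∈ U} {x // x ∈ U} ℝ)) i j
        = K i.1 j.1 + lam * (if i.1 = j.1 then 1 else 0) := by
    intro U i j
    by_cases hij : i.1 = j.1
    · simp [subK, Matrix.one_apply, Subtype.ext_iff, hij]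
    · simp [subK, Matrix.one_apply, Subtype.ext_iff, hij]
  -- dot products agree
  have hdot : zT ⬝ᵥ bT = zS ⬝ᵥ bS := by
    have hT : zT ⬝ᵥ bT = ∑ i ∈ T, h i * K e i := by
      rw [dotProduct, Finset.univ_eq_attach,
        ← Finset.sum_attach T (fun i => h i * K e i)]
    have hSsum : zS ⬝ᵥ bS = ∑ i ∈ S, h i * K e i := by
      rw [hzSh, dotProduct, Finset.univ_eq_attach,
        ← Finset.sum_attach S (fun i => h i * K e i)]
    rw [hT, hSsum]
    refine (Finset.sum_subset hST fun i _ hiS => ?_).symm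
    simp [hh, hiS]
  -- quadratic forms agree
  have expand : ∀ (U : Finset (Fin E)),
      (fun j : {x // x ∈ U} => h j.1) ⬝ᵥ
        ((subK K U + lam • (1 : Matrix {x // x ∈ U} {x // x ∈ U} ℝ)) *ᵥ
          fun j : {x // x ∈ U} => h j.1)
        = ∑ i ∈ U, h i * ∑ j ∈ U, (K i j + lam * (if i = j then 1 else 0)) * h j := by
    intro U
    rw [dotProduct, Finset.univ_eq_attach]
    have step : ∀ i : {x // x ∈ U},
        h i.1 * ((subK K U + lam • (1 : Matrix {x // x ∈ U} {x // x ∈ U} ℝ)) *ᵥ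
            fun j : {x // x ∈ U} => h j.1) i
          = h i.1 * ∑ j ∈ U, (K i.1 j + lam * (if i.1 = j then 1 else 0)) * h j := by
      intro i
      congr 1
      rw [Matrix.mulVec, dotProduct, Finset.univ_eq_attach,
        ← Finset.sum_attach U (fun j => (K i.1 j + lam * (if i.1 = j then 1 else 0)) * h j)]
      exact Finset.sum_congr rfl fun j _ => by rw [entry U i j]
    rw [Finset.sum_congr rfl (fun i _ => step i),
      Finset.sum_attach U (fun i => h i * ∑ j ∈ U, (K i j + lam * (if i = j then 1 else 0)) * h j)]
  have hquad : zT ⬝ᵥ (AT *ᵥ zT) = zS ⬝ᵥ (AS *ᵥ zS) := by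
    have hTq : zT ⬝ᵥ (AT *ᵥ zT) =
        ∑ i ∈ T, h i * ∑ j ∈ T, (K i j + lam * (if i = j then 1 else 0)) * h j := expand T
    have hSq : zS ⬝ᵥ (AS *ᵥ zS) =
        ∑ i ∈ S, h i * ∑ j ∈ S, (K i j + lam * (if i = j then 1 else 0)) * h j := by
      rw [hzSh]; exact expand S
    rw [hTq, hSq]
    refine (Finset.sum_subset hST fun i _ hiS => by simp [hh, hiS]).symm.trans ?_
    refine Finset.sum_congr rfl fun i _ => ?_
    congr 1
    refine (Finset.sum_subset hST fun j _ hjS => ?_).symm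
    simp [hh, hjS]
  -- main inequality
  have hval : zS ⬝ᵥ bS = bS ⬝ᵥ (AS⁻¹ *ᵥ bS) := by
    rw [hzS, dotProduct_comm]
  have hSzq : zS ⬝ᵥ (AS *ᵥ zS) = zS ⬝ᵥ bS := by rw [hASzS]
  have hle : bS ⬝ᵥ (AS⁻¹ *ᵥ bS) ≤ bT ⬝ᵥ (AT⁻¹ *ᵥ bT) := by
    have := quad_le hATpd bT zT
    rw [hdot, hquad, hSzq] at this
    linarith
  exact ⟨hle, by linarith⟩
end

section
/- Let K be an E-by-E real symmetric positive semidefinite matrix with strictly positive diagonal entries, λ > 0, and fix K_card ≥ 1 with (K_card − 1)·μ < 1, where μ = max over i ≠ j of |K_ij| / √(K_ii K_jj) is the mutual coherence of K. Define F(S) = log det(K_S + λ I) and G(S) = Σ_{e∈S} log(K_ee + λ) for subsets S of size K_card, and let S_diag be any size-K_card subset maximizing G. Then F(S_diag) ≥ max over size-K_card subsets S of F(S), minus K_card · log((1 + (K_card − 1)μ) / (1 − (K_card − 1)μ)). -/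
open Matrix Finset

set_option maxHeartbeats 1000000

/-- The mutual coherence `μ = max_{i ≠ j} |K_ij| / √(K_ii K_jj)`. -/
noncomputable def mutualCoherence {E : ℕ} (K : Matrix (Fin E) (Fin E) ℝ) : ℝ :=
  sSup {x : ℝ | ∃ i j : Fin E, i ≠ j ∧ x = |K i j| / Real.sqrt (K i i * K j j)}

/-- `F(S) = log det (K_S + λ I)`. -/
noncomputable def Ffun {E : ℕ} (K : Matrix (Fin E) (Fin E) ℝ) (lam : ℝ)
    (S : Finset (Fin E)) : ℝ :=
  Real.log (subK K S + lam • 1).det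

/-- `G(S) = Σ_{e ∈ S} log (K_ee + λ)`. -/
noncomputable def Gfun {E : ℕ} (K : Matrix (Fin E) (Fin E) ℝ) (lam : ℝ)
    (S : Finset (Fin E)) : ℝ :=
  ∑ e ∈ S, Real.log (K e e + lam)

lemma psd_sq_le {E : ℕ} {K : Matrix (Fin E) (Fin E) ℝ} (hK : K.PosSemidef)
    (i j : Fin E) : K i j ^ 2 ≤ K i i * K j j := by
  rcases eq_or_ne i j with rfl | hij
  · rw [sq]
  · have hsym : K j i = K i j := by
      have := congrFun (congrFun hK.1 j) i
      simpa [Matrix.conjTranspose_apply] using this.symm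
    have hq : ∀ t : ℝ, 0 ≤ K j j * (t * t) + (2 * K i j) * t + K i i := by
      intro t
      have h0 := hK.dotProduct_mulVec_nonneg ((Pi.single i 1 : Fin E → ℝ) + t • (Pi.single j 1 : Fin E → ℝ))
      simp only [star_trivial, dotProduct, mulVec, Pi.add_apply, Pi.smul_apply, Pi.single_apply,
        smul_eq_mul, mul_ite, mul_one, mul_zero, ite_mul, zero_mul, add_mul, mul_add,
        Finset.sum_add_distrib, Finset.sum_ite_eq', Finset.sum_ite_eq, Finset.mem_univ,
        if_true] at h0
      rw [hsym] at h0
      nlinarith [h0]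
    have := discrim_le_zero hq
    rw [discrim] at this
    nlinarith

lemma coh_bdd {E : ℕ} {K : Matrix (Fin E) (Fin E) ℝ} (hK : K.PosSemidef)
    (hdiag : ∀ e, 0 < K e e) :
    ∀ x ∈ {x : ℝ | ∃ i j : Fin E, i ≠ j ∧ x = |K i j| / Real.sqrt (K i i * K j j)}, x ≤ 1 := by
  rintro x ⟨i, j, hij, rfl⟩
  have hpos : 0 < Real.sqrt (K i i * K j j) :=
    Real.sqrt_pos.mpr (mul_pos (hdiag i) (hdiag j))
  rw [div_le_one hpos]
  have h := psd_sq_le hK i j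
  calc |K i j| = Real.sqrt (K i j ^ 2) := (Real.sqrt_sq_eq_abs _).symm
    _ ≤ Real.sqrt (K i i * K j j) := Real.sqrt_le_sqrt h

lemma abs_le_mu {E : ℕ} {K : Matrix (Fin E) (Fin E) ℝ} (hK : K.PosSemidef)
    (hdiag : ∀ e, 0 < K e e) {i j : Fin E} (hij : i ≠ j) :
    |K i j| ≤ mutualCoherence K * Real.sqrt (K i i * K j j) := by
  have hpos : 0 < Real.sqrt (K i i * K j j) :=
    Real.sqrt_pos.mpr (mul_pos (hdiag i) (hdiag j))
  have hmem : |K i j| / Real.sqrt (K i i * K j j) ∈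
      {x : ℝ | ∃ i j : Fin E, i ≠ j ∧ x = |K i j| / Real.sqrt (K i i * K j j)} :=
    ⟨i, j, hij, rfl⟩
  have hle := le_csSup ⟨1, fun x hx => coh_bdd hK hdiag x hx⟩ hmem
  rw [div_le_iff₀ hpos] at hle
  exact hle

lemma mu_nonneg {E : ℕ} {K : Matrix (Fin E) (Fin E) ℝ} (hK : K.PosSemidef)
    (hdiag : ∀ e, 0 < K e e) {i j : Fin E} (hij : i ≠ j) :
    0 ≤ mutualCoherence K := by
  have h := abs_le_mu hK hdiag hij
  have hpos : 0 < Real.sqrt (K i i * K j j) :=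
    Real.sqrt_pos.mpr (mul_pos (hdiag i) (hdiag j))
  nlinarith [abs_nonneg (K i j)]

lemma eig_bound {n : Type*} [Fintype n] [DecidableEq n] {M : Matrix n n ℝ}
    (hM : M.IsHermitian) {δ : ℝ} (hd : ∀ i, M i i = 1)
    (h : ∀ i, ∑ j ∈ Finset.univ.erase i, |M i j| ≤ δ) (i : n) :
    |hM.eigenvalues i - 1| ≤ δ := by
  have hev : Module.End.HasEigenvalue (Matrix.toLin' M) (hM.eigenvalues i) := by
    refine Module.End.hasEigenvalue_of_hasEigenvector
      (x := ((hM.eigenvectorBasis i : EuclideanSpace ℝ n) : n → ℝ)) ⟨?_, ?_⟩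
    · rw [Module.End.mem_eigenspace_iff]
      have := hM.mulVec_eigenvectorBasis i
      rw [Matrix.toLin'_apply]
      ext a
      simpa using congrFun this a
    · intro hv
      exact hM.eigenvectorBasis.orthonormal.ne_zero i (WithLp.ofLp_injective 2 (hv.trans (WithLp.ofLp_zero 2).symm))
  obtain ⟨k, hk⟩ := eigenvalue_mem_ball hev
  rw [Metric.mem_closedBall, hd k, Real.dist_eq] at hk
  refine hk.trans ((le_of_eq ?_).trans (h k))
  simp [Real.norm_eq_abs]

lemma det_bounds {n : Type*} [Fintype n] [DecidableEq n] {M : Matrix n n ℝ}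
    (hM : M.IsHermitian) {δ : ℝ} (hδ1 : δ < 1) (hδ0 : 0 ≤ δ) (hd : ∀ i, M i i = 1)
    (h : ∀ i, ∑ j ∈ Finset.univ.erase i, |M i j| ≤ δ) :
    (1 - δ) ^ (Fintype.card n) ≤ M.det ∧ M.det ≤ (1 + δ) ^ (Fintype.card n) := by
  have hdet : M.det = ∏ i, hM.eigenvalues i := by
    have := hM.det_eq_prod_eigenvalues
    simpa using this
  have hlo : ∀ i, 1 - δ ≤ hM.eigenvalues i := fun i => by
    have := abs_le.mp (eig_bound hM hd h i); linarith [this.1]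
  have hhi : ∀ i, hM.eigenvalues i ≤ 1 + δ := fun i => by
    have := abs_le.mp (eig_bound hM hd h i); linarith [this.2]
  have hpos : (0:ℝ) < 1 - δ := by linarith
  constructor
  · have h1 := Finset.prod_le_prod (s := (univ : Finset n)) (f := fun _ => 1 - δ)
      (g := fun i => hM.eigenvalues i) (fun i _ => le_of_lt hpos) (fun i _ => hlo i)
    rw [hdet]
    simpa [Finset.prod_const, Finset.card_univ] using h1
  · have h1 := Finset.prod_le_prod (s := (univ : Finset n)) (f := fun i => hM.eigenvalues i)
      (g := fun _ => 1 + δ) (fun i _ => le_trans (le_of_lt hpos) (hlo i)) (fun i _ => hhi i)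
    rw [hdet]
    simpa [Finset.prod_const, Finset.card_univ] using h1

lemma FG_bounds {E : ℕ} {K : Matrix (Fin E) (Fin E) ℝ} (hK : K.PosSemidef)
    (hdiag : ∀ e, 0 < K e e) {lam : ℝ} (hlam : 0 < lam) {Kcard : ℕ} (hKcard : 1 ≤ Kcard)
    (hmu : ((Kcard : ℝ) - 1) * mutualCoherence K < 1)
    (hδ0 : 0 ≤ ((Kcard : ℝ) - 1) * mutualCoherence K)
    (S : Finset (Fin E)) (hS : S.card = Kcard) :
    Gfun K lam S + (Kcard : ℝ) * Real.log (1 - ((Kcard : ℝ) - 1) * mutualCoherence K)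
      ≤ Ffun K lam S ∧
    Ffun K lam S ≤
      Gfun K lam S + (Kcard : ℝ) * Real.log (1 + ((Kcard : ℝ) - 1) * mutualCoherence K) := by
  set μ := mutualCoherence K with hμ
  set δ := ((Kcard : ℝ) - 1) * μ with hδ
  set d : {x // x ∈ S} → ℝ := fun i => K i.1 i.1 + lam with hd
  have hdpos : ∀ i, 0 < d i := fun i => add_pos (hdiag i.1) hlam
  set A : Matrix {x // x ∈ S} {x // x ∈ S} ℝ := subK K S + lam • 1 with hA
  have hAherm : A.IsHermitian := by
    apply Matrix.IsHermitian.add (hK.1.submatrix _)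
    unfold Matrix.IsHermitian
    rw [Matrix.conjTranspose_smul, Matrix.conjTranspose_one]
    simp
  set D : Matrix {x // x ∈ S} {x // x ∈ S} ℝ :=
    Matrix.diagonal (fun i => (Real.sqrt (d i))⁻¹) with hD
  set C : Matrix {x // x ∈ S} {x // x ∈ S} ℝ := D * A * D with hC
  have hDh : Dᴴ = D := by
    rw [hD, Matrix.diagonal_conjTranspose]
    simp
  have hCherm : C.IsHermitian := by
    have h := Matrix.isHermitian_mul_mul_conjTranspose D hAherm
    rw [hDh] at h
    exact h
  have hAapp : ∀ i j, A i j = K i.1 j.1 + (if i = j then lam else 0) := by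
    intro i j
    simp [hA, subK, Matrix.one_apply, Matrix.smul_apply, mul_ite]
  have hCapp : ∀ i j, C i j = (Real.sqrt (d i))⁻¹ * A i j * (Real.sqrt (d j))⁻¹ := by
    intro i j
    simp [hC, hD, Matrix.mul_diagonal, Matrix.diagonal_mul, mul_comm, mul_assoc, mul_left_comm]
  have hsq : ∀ i, Real.sqrt (d i) * Real.sqrt (d i) = d i :=
    fun i => Real.mul_self_sqrt (le_of_lt (hdpos i))
  have hsqpos : ∀ i, 0 < Real.sqrt (d i) := fun i => Real.sqrt_pos.mpr (hdpos i)
  have hCd : ∀ i, C i i = 1 := by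
    intro i
    rw [hCapp, hAapp, if_pos rfl]
    have : K i.1 i.1 + lam = d i := rfl
    rw [this]
    field_simp
    rw [Real.sq_sqrt (le_of_lt (hdpos i))]
    exact div_self (ne_of_gt (hdpos i))
  have hCo : ∀ i j : {x // x ∈ S}, i ≠ j → |C i j| ≤ μ := by
    intro i j hij
    have hij' : i.1 ≠ j.1 := fun h => hij (Subtype.ext h)
    have hμ0 : 0 ≤ μ := mu_nonneg hK hdiag hij'
    rw [hCapp, hAapp, if_neg hij]
    have h1 : |K i.1 j.1| ≤ μ * Real.sqrt (K i.1 i.1 * K j.1 j.1) := abs_le_mu hK hdiag hij'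
    have h2 : Real.sqrt (K i.1 i.1 * K j.1 j.1) ≤ Real.sqrt (d i) * Real.sqrt (d j) := by
      rw [Real.sqrt_mul (le_of_lt (hdiag i.1))]
      have hi2 : Real.sqrt (K i.1 i.1) ≤ Real.sqrt (d i) :=
        Real.sqrt_le_sqrt (by simp only [hd]; linarith)
      have hj2 : Real.sqrt (K j.1 j.1) ≤ Real.sqrt (d j) :=
        Real.sqrt_le_sqrt (by simp only [hd]; linarith)
      exact mul_le_mul hi2 hj2 (Real.sqrt_nonneg _) (le_of_lt (hsqpos i))
    have h3 : |K i.1 j.1| ≤ μ * (Real.sqrt (d i) * Real.sqrt (d j)) := by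
      refine h1.trans ?_
      exact mul_le_mul_of_nonneg_left h2 hμ0
    rw [abs_mul, abs_mul, add_zero, abs_inv, abs_inv,
      abs_of_pos (hsqpos i), abs_of_pos (hsqpos j)]
    rw [mul_comm ((Real.sqrt (d i))⁻¹) (|K i.1 j.1|), mul_assoc, ← mul_inv]
    rw [mul_inv_le_iff₀ (mul_pos (hsqpos i) (hsqpos j))]
    linarith [h3]
  have hcard : Fintype.card {x // x ∈ S} = Kcard := by
    rw [Fintype.card_coe, hS]
  have hrow : ∀ i, ∑ j ∈ Finset.univ.erase i, |C i j| ≤ δ := by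
    intro i
    have hb : ∀ j ∈ Finset.univ.erase i, |C i j| ≤ μ := by
      intro j hj
      exact hCo i j (Finset.ne_of_mem_erase hj).symm
    have := Finset.sum_le_card_nsmul _ _ _ hb
    have hce : (Finset.univ.erase i).card = Kcard - 1 := by
      rw [Finset.card_erase_of_mem (Finset.mem_univ i), Finset.card_univ, hcard]
    rw [hce] at this
    refine this.trans ?_
    rw [nsmul_eq_mul, hδ, Nat.cast_sub hKcard]
    simp
  have hδ1 : δ < 1 := hmu
  obtain ⟨hlo, hhi⟩ := det_bounds hCherm hδ1 hδ0 hCd hrow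
  have h1δ : (0:ℝ) < 1 - δ := by linarith
  have hdetCpos : 0 < C.det := lt_of_lt_of_le (pow_pos h1δ _) hlo
  have hprodpos : 0 < ∏ i, d i := Finset.prod_pos (fun i _ => hdpos i)
  have hdetD : D.det = ∏ i, (Real.sqrt (d i))⁻¹ := by simp [hD]
  have hdetfac : C.det = D.det * A.det * D.det := by
    rw [hC, Matrix.det_mul, Matrix.det_mul]
  have hDD : D.det * D.det = (∏ i, d i)⁻¹ := by
    rw [hdetD, ← Finset.prod_mul_distrib, ← Finset.prod_inv_distrib]
    exact Finset.prod_congr rfl fun i _ => by rw [← mul_inv, hsq i]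
  have hAdet : A.det = (∏ i, d i) * C.det := by
    have h1 : C.det = A.det * (∏ i, d i)⁻¹ := by
      rw [hdetfac, ← hDD]; ring
    rw [h1, mul_comm (A.det) ((∏ i, d i)⁻¹), ← mul_assoc,
      mul_inv_cancel₀ (ne_of_gt hprodpos), one_mul]
  have hGlog : Real.log (∏ i, d i) = Gfun K lam S := by
    rw [Real.log_prod (fun i _ => ne_of_gt (hdpos i))]
    rw [Gfun, ← Finset.sum_attach S (fun e => Real.log (K e e + lam))]
    rw [← Finset.univ_eq_attach]
  have hF : Ffun K lam S = Gfun K lam S + Real.log C.det := by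
    rw [Ffun, ← hA, hAdet, Real.log_mul (ne_of_gt hprodpos) (ne_of_gt hdetCpos), hGlog]
  have hloglo : (Kcard : ℝ) * Real.log (1 - δ) ≤ Real.log C.det := by
    calc (Kcard : ℝ) * Real.log (1 - δ) = Real.log ((1 - δ) ^ Kcard) := by
          rw [Real.log_pow]
      _ ≤ Real.log C.det := Real.log_le_log (pow_pos h1δ _) (by rwa [hcard] at hlo)
  have hloghi : Real.log C.det ≤ (Kcard : ℝ) * Real.log (1 + δ) := by
    calc Real.log C.det ≤ Real.log ((1 + δ) ^ Kcard) :=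
          Real.log_le_log hdetCpos (by rwa [hcard] at hhi)
      _ = (Kcard : ℝ) * Real.log (1 + δ) := by rw [Real.log_pow]
  constructor
  · rw [hF]; linarith
  · rw [hF]; linarith

/-- If `K` is a real symmetric positive semidefinite matrix with strictly
positive diagonal, `λ > 0`, `K_card ≥ 1`, `(K_card − 1)μ < 1` with `μ` the mutual coherence,
and `S_diag` is any size-`K_card` subset maximizing `G(S) = Σ_{e∈S} log(K_ee + λ)`, then
`F(S_diag) ≥ max_{|S| = K_card} F(S) − K_card · log((1 + (K_card − 1)μ)/(1 − (K_card − 1)μ))`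
where `F(S) = log det(K_S + λI)`. -/
theorem diag_proxy_near_optimal {E : ℕ} (K : Matrix (Fin E) (Fin E) ℝ) (hK : K.PosSemidef)
    (hdiag : ∀ e, 0 < K e e) (lam : ℝ) (hlam : 0 < lam)
    (Kcard : ℕ) (hKcard : 1 ≤ Kcard)
    (hmu : ((Kcard : ℝ) - 1) * mutualCoherence K < 1)
    (Sdiag : Finset (Fin E)) (hSd : Sdiag.card = Kcard)
    (hGmax : ∀ S : Finset (Fin E), S.card = Kcard → Gfun K lam S ≤ Gfun K lam Sdiag) :
    ∀ S : Finset (Fin E), S.card = Kcard →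
      Ffun K lam S -
          (Kcard : ℝ) *
            Real.log ((1 + ((Kcard : ℝ) - 1) * mutualCoherence K) /
              (1 - ((Kcard : ℝ) - 1) * mutualCoherence K)) ≤
        Ffun K lam Sdiag := by
  intro S hS
  have hδ0 : 0 ≤ ((Kcard : ℝ) - 1) * mutualCoherence K := by
    rcases Nat.lt_or_ge Kcard 2 with h2 | h2
    · have h1 : Kcard = 1 := by omega
      rw [h1]
      norm_num
    · have hc : 1 < Sdiag.card := by omega
      obtain ⟨a, ha, b, hb, hab⟩ := Finset.one_lt_card.mp hc
      have hμ0 : 0 ≤ mutualCoherence K := mu_nonneg hK hdiag hab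
      have hk1 : (0:ℝ) ≤ (Kcard : ℝ) - 1 := by
        have : (1:ℝ) ≤ (Kcard : ℝ) := by exact_mod_cast hKcard
        linarith
      exact mul_nonneg hk1 hμ0
  obtain ⟨hS1, hS2⟩ := FG_bounds hK hdiag hlam hKcard hmu hδ0 S hS
  obtain ⟨hD1, hD2⟩ := FG_bounds hK hdiag hlam hKcard hmu hδ0 Sdiag hSd
  have hG := hGmax S hS
  have h1δ : (0:ℝ) < 1 - ((Kcard : ℝ) - 1) * mutualCoherence K := by linarith
  have h2δ : (0:ℝ) < 1 + ((Kcard : ℝ) - 1) * mutualCoherence K := by linarith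
  rw [Real.log_div (ne_of_gt h2δ) (ne_of_gt h1δ), mul_sub]
  linarith
end

section
/- Let K be an E-by-E real symmetric positive semidefinite matrix with strictly positive diagonal entries, λ > 0, and let μ = max over i ≠ j of |K_ij| / √(K_ii K_jj). Fix a subset S of size K_card with (K_card − 1)·μ < 1, and define F(S) = log det(K_S + λ I) and G(S) = Σ_{e∈S} log(K_ee + λ). Then K_card · log(1 − (K_card − 1)μ) ≤ F(S) − G(S) ≤ K_card · log(1 + (K_card − 1)μ). -/
open Matrix Finset

/-- Gershgorin sandwich for the log-determinant of a symmetric real matrix with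
unit diagonal and off-diagonal row sums bounded by `a < 1`. -/
lemma symm_logdet_sandwich {n : Type*} [Fintype n] [DecidableEq n] {N : Matrix n n ℝ}
    (hN : N.IsHermitian) (a : ℝ) (ha1 : a < 1)
    (hdiagN : ∀ i, N i i = 1)
    (hrow : ∀ k : n, ∑ j ∈ Finset.univ.erase k, ‖N k j‖ ≤ a) :
    0 < N.det ∧
    (Fintype.card n : ℝ) * Real.log (1 - a) ≤ Real.log N.det ∧
    Real.log N.det ≤ (Fintype.card n : ℝ) * Real.log (1 + a) := by
  have key : ∀ i, 1 - a ≤ hN.eigenvalues i ∧ hN.eigenvalues i ≤ 1 + a := by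
    intro i
    have hvne : (⇑(hN.eigenvectorBasis i) : n → ℝ) ≠ 0 := by
      intro h
      exact hN.eigenvectorBasis.orthonormal.ne_zero i (by ext x; exact congrFun h x)
    have hev : Module.End.HasEigenvalue (Matrix.toLin' N) (hN.eigenvalues i) := by
      refine Module.End.hasEigenvalue_of_hasEigenvector
        (x := ⇑(hN.eigenvectorBasis i)) ⟨Module.End.mem_eigenspace_iff.mpr ?_, hvne⟩
      rw [Matrix.toLin'_apply]
      exact hN.mulVec_eigenvectorBasis i
    obtain ⟨k, hk⟩ := eigenvalue_mem_ball hev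
    rw [Metric.mem_closedBall, Real.dist_eq, hdiagN k] at hk
    have h2 := abs_le.1 (hk.trans (hrow k))
    constructor <;> linarith [h2.1, h2.2]
  have hpos : ∀ i, 0 < hN.eigenvalues i := fun i => lt_of_lt_of_le (by linarith) (key i).1
  have hdet : N.det = ∏ i, hN.eigenvalues i := by
    simpa using hN.det_eq_prod_eigenvalues
  refine ⟨hdet ▸ Finset.prod_pos fun i _ => hpos i, ?_, ?_⟩ <;>
    rw [hdet, Real.log_prod (fun i _ => (hpos i).ne')]
  · calc (Fintype.card n : ℝ) * Real.log (1 - a) = ∑ _i : n, Real.log (1 - a) := by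
          rw [Finset.sum_const, nsmul_eq_mul, Finset.card_univ]
      _ ≤ ∑ i, Real.log (hN.eigenvalues i) :=
          Finset.sum_le_sum fun i _ => Real.log_le_log (by linarith) (key i).1
  · calc ∑ i, Real.log (hN.eigenvalues i) ≤ ∑ _i : n, Real.log (1 + a) :=
          Finset.sum_le_sum fun i _ => Real.log_le_log (hpos i) (key i).2
      _ = (Fintype.card n : ℝ) * Real.log (1 + a) := by
          rw [Finset.sum_const, nsmul_eq_mul, Finset.card_univ]

lemma mc_set_finite {E : ℕ} (K : Matrix (Fin E) (Fin E) ℝ) :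
    {x : ℝ | ∃ i j : Fin E, i ≠ j ∧ x = |K i j| / Real.sqrt (K i i * K j j)}.Finite := by
  apply (Set.finite_range
    (fun p : Fin E × Fin E => |K p.1 p.2| / Real.sqrt (K p.1 p.1 * K p.2 p.2))).subset
  rintro x ⟨i, j, _, rfl⟩
  exact ⟨(i, j), rfl⟩

lemma le_mc {E : ℕ} (K : Matrix (Fin E) (Fin E) ℝ) {i j : Fin E} (h : i ≠ j) :
    |K i j| / Real.sqrt (K i i * K j j) ≤ mutualCoherence K :=
  le_csSup (mc_set_finite K).bddAbove ⟨i, j, h, rfl⟩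

lemma mc_nonneg {E : ℕ} (K : Matrix (Fin E) (Fin E) ℝ) : 0 ≤ mutualCoherence K := by
  by_cases h : {x : ℝ | ∃ i j : Fin E, i ≠ j ∧
      x = |K i j| / Real.sqrt (K i i * K j j)}.Nonempty
  · obtain ⟨x, i, j, hij, rfl⟩ := h
    exact le_trans (by positivity) (le_mc K hij)
  · rw [mutualCoherence, Set.not_nonempty_iff_eq_empty.1 h, Real.sSup_empty]

lemma abs_le_mc {E : ℕ} (K : Matrix (Fin E) (Fin E) ℝ) (hdiag : ∀ e, 0 < K e e)
    {i j : Fin E} (h : i ≠ j) :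
    |K i j| ≤ mutualCoherence K * Real.sqrt (K i i * K j j) := by
  have hs : 0 < Real.sqrt (K i i * K j j) :=
    Real.sqrt_pos.2 (mul_pos (hdiag i) (hdiag j))
  calc |K i j| = |K i j| / Real.sqrt (K i i * K j j) * Real.sqrt (K i i * K j j) := by
        field_simp
    _ ≤ _ := by gcongr; exact le_mc K h

/-- For `K` real symmetric positive semidefinite with strictly positive
diagonal, `λ > 0`, mutual coherence `μ`, and a subset `S` of size `K_card` with
`(K_card − 1)μ < 1`:
`K_card·log(1 − (K_card − 1)μ) ≤ F(S) − G(S) ≤ K_card·log(1 + (K_card − 1)μ)`,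
where `F(S) = log det(K_S + λI)` and `G(S) = Σ_{e∈S} log(K_ee + λ)`. -/
theorem logdet_diag_sandwich {E : ℕ} (K : Matrix (Fin E) (Fin E) ℝ) (hK : K.PosSemidef)
    (hdiag : ∀ e, 0 < K e e) (lam : ℝ) (hlam : 0 < lam)
    (S : Finset (Fin E)) (Kcard : ℕ) (hS : S.card = Kcard)
    (hmu : ((Kcard : ℝ) - 1) * mutualCoherence K < 1) :
    (Kcard : ℝ) * Real.log (1 - ((Kcard : ℝ) - 1) * mutualCoherence K) ≤
        Ffun K lam S - Gfun K lam S ∧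
      Ffun K lam S - Gfun K lam S ≤
        (Kcard : ℝ) * Real.log (1 + ((Kcard : ℝ) - 1) * mutualCoherence K) := by
  rcases Nat.eq_zero_or_pos Kcard with hk0 | hk1
  · subst hk0
    have hSe : S = ∅ := Finset.card_eq_zero.1 hS
    subst hSe
    haveI : IsEmpty {x // x ∈ (∅ : Finset (Fin E))} := Finset.isEmpty_coe_sort.2 rfl
    simp [Ffun, Gfun, Matrix.det_isEmpty]
  · set μ := mutualCoherence K with hμdef
    set a : ℝ := ((Kcard : ℝ) - 1) * μ with hadef
    have hk1' : (1 : ℝ) ≤ (Kcard : ℝ) := by exact_mod_cast hk1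
    have ha0 : 0 ≤ a := mul_nonneg (by linarith) (mc_nonneg K)
    set n' := {x // x ∈ S}
    set M : Matrix n' n' ℝ := subK K S + lam • 1 with hMdef
    have hM : M.IsHermitian := by
      refine Matrix.IsHermitian.add (hK.1.submatrix _) ?_
      rw [Matrix.smul_one_eq_diagonal]
      exact Matrix.isHermitian_diagonal _
    set d : n' → ℝ := fun i => Real.sqrt (K i.1 i.1 + lam) with hddef
    have hdpos : ∀ i, 0 < d i := fun i => Real.sqrt_pos.2 (by linarith [hdiag i.1])
    set Dinv : Matrix n' n' ℝ := Matrix.diagonal (fun i => (d i)⁻¹) with hDdef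
    set N : Matrix n' n' ℝ := Dinv * M * Dinv with hNdef
    have hDh : Dinv.IsHermitian := Matrix.isHermitian_diagonal _
    have hNh : N.IsHermitian := by
      rw [Matrix.IsHermitian, hNdef, Matrix.conjTranspose_mul, Matrix.conjTranspose_mul,
        hDh.eq, hM.eq, mul_assoc]
    have hNentry : ∀ i j, N i j = (d i)⁻¹ * M i j * (d j)⁻¹ := by
      intro i j
      rw [hNdef, hDdef, Matrix.mul_diagonal, Matrix.diagonal_mul]
    have hMdiag : ∀ i : n', M i i = K i.1 i.1 + lam := by
      intro i
      simp [hMdef, subK, Matrix.add_apply, Matrix.one_apply_eq]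
    have hMoff : ∀ i j : n', i ≠ j → M i j = K i.1 j.1 := by
      intro i j hij
      simp [hMdef, subK, Matrix.add_apply, Matrix.one_apply_ne hij]
    have hdiagN : ∀ i, N i i = 1 := by
      intro i
      have hsq : d i * d i = K i.1 i.1 + lam :=
        Real.mul_self_sqrt (by linarith [hdiag i.1])
      rw [hNentry, hMdiag, ← hsq]
      field_simp
      exact div_self (hdpos i).ne'
    have hoff : ∀ i j : n', i ≠ j → |N i j| ≤ μ := by
      intro i j hij
      have hij' : i.1 ≠ j.1 := fun h => hij (Subtype.ext h)
      have hKle : |K i.1 j.1| ≤ μ * (d i * d j) := by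
        refine (abs_le_mc K hdiag hij').trans ?_
        have h1 : Real.sqrt (K i.1 i.1 * K j.1 j.1) ≤ d i * d j := by
          rw [Real.sqrt_mul (le_of_lt (hdiag i.1))]
          have e1 : Real.sqrt (K i.1 i.1) ≤ d i :=
            Real.sqrt_le_sqrt (by linarith)
          have e2 : Real.sqrt (K j.1 j.1) ≤ d j :=
            Real.sqrt_le_sqrt (by linarith)
          exact mul_le_mul e1 e2 (Real.sqrt_nonneg _) (le_of_lt (hdpos i))
        exact mul_le_mul_of_nonneg_left h1 (mc_nonneg K)
      rw [hNentry, hMoff i j hij, abs_mul, abs_mul, abs_inv, abs_inv,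
        abs_of_pos (hdpos i), abs_of_pos (hdpos j)]
      have hdij : 0 < d i * d j := mul_pos (hdpos i) (hdpos j)
      calc (d i)⁻¹ * |K i.1 j.1| * (d j)⁻¹ ≤ (d i)⁻¹ * (μ * (d i * d j)) * (d j)⁻¹ := by
            gcongr
        _ = μ * ((d i)⁻¹ * d i) * ((d j)⁻¹ * d j) := by ring
        _ = μ := by
            rw [inv_mul_cancel₀ (hdpos i).ne', inv_mul_cancel₀ (hdpos j).ne']
            ring
    have hcard : Fintype.card n' = Kcard := by
      rw [Fintype.card_coe, hS]
    have hrow : ∀ k : n', ∑ j ∈ Finset.univ.erase k, ‖N k j‖ ≤ a := by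
      intro k
      have hb : ∀ j ∈ Finset.univ.erase k, ‖N k j‖ ≤ μ := by
        intro j hj
        simpa [Real.norm_eq_abs] using hoff k j (Ne.symm (Finset.ne_of_mem_erase hj))
      calc ∑ j ∈ Finset.univ.erase k, ‖N k j‖ ≤ (Finset.univ.erase k).card • μ :=
            Finset.sum_le_card_nsmul _ _ _ hb
        _ = ((Kcard - 1 : ℕ) : ℝ) * μ := by
            rw [Finset.card_erase_of_mem (Finset.mem_univ k), Finset.card_univ, hcard,
              nsmul_eq_mul]
        _ = a := by
            rw [hadef, Nat.cast_sub hk1, Nat.cast_one]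
    obtain ⟨hdpos', hlow, hhigh⟩ := symm_logdet_sandwich hNh a hmu hdiagN hrow
    rw [hcard] at hlow hhigh
    -- determinant factorisation
    have hdetN : N.det = (∏ i, (d i)⁻¹) * M.det * (∏ i, (d i)⁻¹) := by
      rw [hNdef, Matrix.det_mul, Matrix.det_mul, hDdef, Matrix.det_diagonal]
    have hP : (0 : ℝ) < ∏ i, d i := Finset.prod_pos fun i _ => hdpos i
    have hMdet : M.det = (∏ i : n', (K i.1 i.1 + lam)) * N.det := by
      have h1 : (∏ i : n', (K i.1 i.1 + lam)) = (∏ i, d i) * (∏ i, d i) := by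
        rw [← Finset.prod_mul_distrib]
        exact Finset.prod_congr rfl fun i _ =>
          (Real.mul_self_sqrt (by linarith [hdiag i.1])).symm
      rw [h1, hdetN, Finset.prod_inv_distrib]
      field_simp
    have hProdpos : (0 : ℝ) < ∏ i : n', (K i.1 i.1 + lam) :=
      Finset.prod_pos fun i _ => by linarith [hdiag i.1]
    have hFG : Ffun K lam S - Gfun K lam S = Real.log N.det := by
      have hG : Gfun K lam S = ∑ i : n', Real.log (K i.1 i.1 + lam) := by
        rw [Gfun, ← Finset.sum_coe_sort S (fun e => Real.log (K e e + lam))]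
      rw [Ffun, ← hMdef, hMdet, Real.log_mul hProdpos.ne' hdpos'.ne',
        Real.log_prod (fun i _ => ne_of_gt (by linarith [hdiag i.1])), hG]
      ring
    rw [hFG]
    exact ⟨hlow, hhigh⟩
end

section
/- Let K and K̂ be E-by-E real symmetric matrices with K positive semidefinite, let λ > 0 and λ̂ ∈ ℝ, and let S be a subset of {1,...,E} of size m. Suppose every entry of K̂_S − K_S has absolute value at most ε and |λ̂ − λ| ≤ ε/m, and set Δ = (m + 1/m)·ε. If Δ < λ, then K̂_S + λ̂ I is positive definite and |log det(K̂_S + λ̂ I) − log det(K_S + λ I)| ≤ −m · log(1 − Δ/λ). -/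
open Matrix Finset

lemma eig_lower {n : Type*} [Fintype n] [DecidableEq n] {A : Matrix n n ℝ}
    (hA : A.IsHermitian) {a : ℝ}
    (h : ∀ x : n → ℝ, a * (x ⬝ᵥ x) ≤ x ⬝ᵥ A *ᵥ x) (i : n) : a ≤ hA.eigenvalues i := by
  have hn : ‖hA.eigenvectorBasis i‖ = 1 := hA.eigenvectorBasis.orthonormal.1 i
  have hvv : (⇑(hA.eigenvectorBasis i) : n → ℝ) ⬝ᵥ ⇑(hA.eigenvectorBasis i) = 1 := by
    have h2 := real_inner_self_eq_norm_sq (hA.eigenvectorBasis i)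
    rw [hn, PiLp.inner_apply] at h2
    simp only [one_pow, RCLike.inner_apply, starRingEnd_apply, star_trivial] at h2
    simpa [dotProduct] using h2
  have he := hA.eigenvalues_eq i
  have he2 : hA.eigenvalues i = (⇑(hA.eigenvectorBasis i) : n → ℝ) ⬝ᵥ A *ᵥ ⇑(hA.eigenvectorBasis i) := by
    simpa using he
  rw [he2]
  have h3 := h (⇑(hA.eigenvectorBasis i))
  rwa [hvv, mul_one] at h3

open scoped MatrixOrder in
lemma det_le_det_of_le {n : Type*} [Fintype n] [DecidableEq n] {C D : Matrix n n ℝ}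
    (hC : C.PosDef) (hD : D.IsHermitian)
    (h : ∀ x : n → ℝ, x ⬝ᵥ C *ᵥ x ≤ x ⬝ᵥ D *ᵥ x) : C.det ≤ D.det := by
  have hCs := hC.posSemidef
  set R := CFC.sqrt C with hRdef
  have hRps : R.PosSemidef := (CFC.sqrt_nonneg C).posSemidef
  have hRR : R * R = C := CFC.sqrt_mul_sqrt_self C hCs.nonneg
  have hdetC : 0 < C.det := hC.det_pos
  have hdetR : R.det ≠ 0 := by
    intro h0
    rw [← hRR, det_mul, h0, mul_zero] at hdetC
    exact lt_irrefl _ hdetC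
  have hRu : IsUnit R.det := isUnit_iff_ne_zero.mpr hdetR
  have hRiR : R⁻¹ * R = 1 := nonsing_inv_mul R hRu
  have hRRi : R * R⁻¹ = 1 := mul_nonsing_inv R hRu
  -- D - C is PosSemidef
  have hDC : (D - C).PosSemidef := by
    refine PosSemidef.of_dotProduct_mulVec_nonneg (hD.sub hC.isHermitian) fun x => ?_
    have := h x
    simp only [star_trivial, sub_mulVec, dotProduct_sub]
    linarith
  have hRinv : R⁻¹.PosSemidef := hRps.inv
  set N := R⁻¹ * (D - C) * R⁻¹ with hNdef
  have hNps : N.PosSemidef := by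
    have := hDC.conjTranspose_mul_mul_same R⁻¹
    rwa [hRinv.isHermitian.eq] at this
  -- D = R * (1 + N) * R
  have hfact : D = R * (1 + N) * R := by
    rw [hNdef]
    rw [mul_add, add_mul, mul_one]
    have : R * (R⁻¹ * (D - C) * R⁻¹) * R = D - C := by
      rw [← mul_assoc, ← mul_assoc, hRRi, one_mul, mul_assoc, hRiR, mul_one]
    rw [this, hRR]
    abel
  have hM : (1 + N).IsHermitian := by
    have h1 : (1 : Matrix n n ℝ).IsHermitian := isHermitian_one
    exact h1.add hNps.isHermitian
  have hMev : ∀ i, (1 : ℝ) ≤ hM.eigenvalues i := by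
    apply eig_lower hM
    intro x
    have h0 := hNps.dotProduct_mulVec_nonneg x
    simp only [star_trivial] at h0
    simp only [add_mulVec, one_mulVec, dotProduct_add, one_mul]
    linarith
  have hdetM : (1 : ℝ) ≤ (1 + N).det := by
    rw [hM.det_eq_prod_eigenvalues]
    have : ∏ _i : n, (1:ℝ) ≤ ∏ i, hM.eigenvalues i :=
      Finset.prod_le_prod (fun _ _ => by norm_num) (fun i _ => hMev i)
    simpa using this
  calc C.det = C.det * 1 := (mul_one _).symm
    _ ≤ C.det * (1 + N).det := by nlinarith
    _ = D.det := by
        rw [hfact, det_mul, det_mul, ← hRR, det_mul]; ring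

set_option maxHeartbeats 1000000 in
set_option maxHeartbeats 1000000 in
/-- **log-determinant perturbation bound.**  Let `K, K̂` be real symmetric
`E×E` matrices with `K` positive semidefinite, `λ > 0`, `λ̂ ∈ ℝ`, and `S` a subset of size
`m`.  If every entry of `K̂_S − K_S` has absolute value at most `ε`, `|λ̂ − λ| ≤ ε/m`, and
`Δ = (m + 1/m)·ε < λ`, then `K̂_S + λ̂I` is positive definite and
`|log det(K̂_S + λ̂I) − log det(K_S + λI)| ≤ −m·log(1 − Δ/λ)`. -/
theorem logdet_perturbation {E : ℕ} (K Kh : Matrix (Fin E) (Fin E) ℝ)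
    (hK : K.PosSemidef) (hKh : Kh.IsSymm)
    (lam lamh eps : ℝ) (hlam : 0 < lam)
    (S : Finset (Fin E)) (m : ℕ) (hm : S.card = m)
    (hent : ∀ i ∈ S, ∀ j ∈ S, |Kh i j - K i j| ≤ eps)
    (hl : |lamh - lam| ≤ eps / (m : ℝ))
    (hDelta : ((m : ℝ) + 1 / (m : ℝ)) * eps < lam) :
    (subK Kh S + lamh • 1).PosDef ∧
      |Real.log (subK Kh S + lamh • 1).det - Real.log (subK K S + lam • 1).det| ≤
        -(m : ℝ) * Real.log (1 - ((m : ℝ) + 1 / (m : ℝ)) * eps / lam) := by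
  rcases Nat.eq_zero_or_pos m with hm0 | hm0
  · -- degenerate case m = 0
    subst hm0
    have hS : S = ∅ := Finset.card_eq_zero.mp hm
    subst hS
    have hE : IsEmpty {x // x ∈ (∅ : Finset (Fin E))} :=
      ⟨fun x => Finset.notMem_empty _ x.2⟩
    constructor
    · refine ⟨?_, fun x hx => ?_⟩
      · ext i j; exact isEmptyElim i
      · exact absurd (Finsupp.ext fun i => isEmptyElim i) hx
    · simp [Matrix.det_isEmpty, Real.log_one]
  -- main case m ≥ 1
  have hmR : (0:ℝ) < m := Nat.cast_pos.mpr hm0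
  have hcard : Fintype.card {x // x ∈ S} = m := by
    simpa [Fintype.card_coe] using hm
  have hSne : S.Nonempty := Finset.card_pos.mp (hm ▸ hm0)
  obtain ⟨i0, hi0⟩ := hSne
  have heps : 0 ≤ eps := le_trans (abs_nonneg _) (hent i0 hi0 i0 hi0)
  set del : ℝ := ((m : ℝ) + 1 / (m : ℝ)) * eps with hdel
  have hdel0 : 0 ≤ del := by positivity
  set t : ℝ := del / lam with ht
  have ht0 : 0 ≤ t := by positivity
  have ht1 : t < 1 := (div_lt_one hlam).mpr hDelta
  have htlam : t * lam = del := div_mul_cancel₀ del (ne_of_gt hlam)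
  set A : Matrix {x // x ∈ S} {x // x ∈ S} ℝ := subK K S + lam • 1 with hA
  set B : Matrix {x // x ∈ S} {x // x ∈ S} ℝ := subK Kh S + lamh • 1 with hB
  have hermA : A.IsHermitian := by
    refine (hK.isHermitian.submatrix _).add ?_
    simp [Matrix.IsHermitian, Matrix.conjTranspose_smul]
  have hermB : B.IsHermitian := by
    have hKhH : Kh.IsHermitian := by
      rwa [Matrix.IsHermitian, Matrix.conjTranspose_eq_transpose_of_trivial]
    refine (hKhH.submatrix _).add ?_
    simp [Matrix.IsHermitian, Matrix.conjTranspose_smul]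
  have hsub : (subK K S).PosSemidef := hK.submatrix _
  -- dot product facts
  have hdp_nonneg : ∀ x : {x // x ∈ S} → ℝ, 0 ≤ x ⬝ᵥ x := fun x =>
    Finset.sum_nonneg fun j _ => mul_self_nonneg _
  have hdp_pos : ∀ x : {x // x ∈ S} → ℝ, x ≠ 0 → 0 < x ⬝ᵥ x := by
    intro x hx
    obtain ⟨i, hi⟩ := Function.ne_iff.mp hx
    exact Finset.sum_pos' (fun j _ => mul_self_nonneg _)
      ⟨i, Finset.mem_univ i, mul_self_pos.mpr hi⟩
  -- quadratic form of A is at least lam * ‖x‖²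
  have qA : ∀ x : {x // x ∈ S} → ℝ, lam * (x ⬝ᵥ x) ≤ x ⬝ᵥ A *ᵥ x := by
    intro x
    have h0 := hsub.dotProduct_mulVec_nonneg x
    rw [star_trivial] at h0
    rw [hA]
    simp only [Matrix.add_mulVec, Matrix.smul_mulVec, Matrix.one_mulVec,
      dotProduct_add, dotProduct_smul, smul_eq_mul]
    linarith
  -- perturbation bound on quadratic forms
  have hP : ∀ x : {x // x ∈ S} → ℝ,
      |x ⬝ᵥ B *ᵥ x - x ⬝ᵥ A *ᵥ x| ≤ del * (x ⬝ᵥ x) := by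
    intro x
    have hBA : B = A + ((subK Kh S - subK K S) + (lamh - lam) • (1 : Matrix _ _ ℝ)) := by
      rw [hA, hB, sub_smul]
      abel
    have hQ : x ⬝ᵥ (subK Kh S - subK K S) *ᵥ x
        = ∑ i, ∑ j, x i * (Kh i.1 j.1 - K i.1 j.1) * x j := by
      simp only [dotProduct, Matrix.mulVec, subK, Matrix.sub_apply,
        Matrix.submatrix_apply, Finset.mul_sum]
      exact Finset.sum_congr rfl fun i _ => Finset.sum_congr rfl fun j _ => by ring
    have hrep : x ⬝ᵥ B *ᵥ x - x ⬝ᵥ A *ᵥ x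
        = (∑ i, ∑ j, x i * (Kh i.1 j.1 - K i.1 j.1) * x j) + (lamh - lam) * (x ⬝ᵥ x) := by
      rw [hBA]
      simp only [Matrix.add_mulVec, dotProduct_add, Matrix.smul_mulVec,
        Matrix.one_mulVec, dotProduct_smul, smul_eq_mul]
      rw [hQ]
      ring
    rw [hrep]
    have hb1 : |∑ i, ∑ j, x i * (Kh i.1 j.1 - K i.1 j.1) * x j|
        ≤ eps * (∑ i, |x i|) ^ 2 := by
      calc |∑ i, ∑ j, x i * (Kh i.1 j.1 - K i.1 j.1) * x j|
          ≤ ∑ i, ∑ j, |x i * (Kh i.1 j.1 - K i.1 j.1) * x j| := by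
            refine (Finset.abs_sum_le_sum_abs _ _).trans ?_
            exact Finset.sum_le_sum fun i _ => Finset.abs_sum_le_sum_abs _ _
        _ ≤ ∑ i, ∑ j, |x i| * eps * |x j| := by
            refine Finset.sum_le_sum fun i _ => Finset.sum_le_sum fun j _ => ?_
            rw [abs_mul, abs_mul]
            have hij := hent i.1 i.2 j.1 j.2
            exact mul_le_mul_of_nonneg_right
              (mul_le_mul_of_nonneg_left hij (abs_nonneg _)) (abs_nonneg _)
        _ = eps * (∑ i, |x i|) ^ 2 := by
            rw [sq, Finset.sum_mul_sum, Finset.mul_sum]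
            refine Finset.sum_congr rfl fun i _ => ?_
            rw [Finset.mul_sum]
            refine Finset.sum_congr rfl fun j _ => by ring
    have hb2 : (∑ i, |x i|) ^ 2 ≤ (m : ℝ) * (x ⬝ᵥ x) := by
      have := sq_sum_le_card_mul_sum_sq (s := Finset.univ) (f := fun i => |x i|)
      simp only [Finset.card_univ, hcard] at this
      calc (∑ i, |x i|) ^ 2 ≤ (m : ℝ) * ∑ i, |x i| ^ 2 := this
        _ = (m : ℝ) * (x ⬝ᵥ x) := by
            rw [dotProduct]
            congr 1
            refine Finset.sum_congr rfl fun i _ => by rw [sq_abs, sq]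
    have hb3 : |(lamh - lam) * (x ⬝ᵥ x)| ≤ eps / (m : ℝ) * (x ⬝ᵥ x) := by
      rw [abs_mul, abs_of_nonneg (hdp_nonneg x)]
      exact mul_le_mul_of_nonneg_right hl (hdp_nonneg x)
    calc |(∑ i, ∑ j, x i * (Kh i.1 j.1 - K i.1 j.1) * x j) + (lamh - lam) * (x ⬝ᵥ x)|
        ≤ |∑ i, ∑ j, x i * (Kh i.1 j.1 - K i.1 j.1) * x j|
          + |(lamh - lam) * (x ⬝ᵥ x)| := abs_add_le _ _
      _ ≤ eps * ((m : ℝ) * (x ⬝ᵥ x)) + eps / (m : ℝ) * (x ⬝ᵥ x) := by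
          have := mul_le_mul_of_nonneg_left hb2 heps
          linarith [hb1, hb3, this]
      _ = del * (x ⬝ᵥ x) := by rw [hdel]; field_simp
  -- positive definiteness
  have hApd : A.PosDef := by
    refine PosDef.of_dotProduct_mulVec_pos hermA fun x hx => ?_
    rw [star_trivial]
    have := qA x
    nlinarith [hdp_pos x hx]
  have hBpd : B.PosDef := by
    refine PosDef.of_dotProduct_mulVec_pos hermB fun x hx => ?_
    rw [star_trivial]
    have h1 := (abs_le.mp (hP x)).1
    have h2 := qA x
    have h3 := hdp_pos x hx
    nlinarith [mul_pos (sub_pos.mpr hDelta) h3]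
  refine ⟨hBpd, ?_⟩
  -- Loewner bounds
  have hlow : ∀ x : {x // x ∈ S} → ℝ, x ⬝ᵥ ((1 - t) • A) *ᵥ x ≤ x ⬝ᵥ B *ᵥ x := by
    intro x
    rw [Matrix.smul_mulVec, dotProduct_smul, smul_eq_mul]
    have h1 := (abs_le.mp (hP x)).1
    have h2 := mul_le_mul_of_nonneg_left (qA x) ht0
    rw [← mul_assoc, htlam] at h2
    nlinarith
  have hup : ∀ x : {x // x ∈ S} → ℝ, x ⬝ᵥ B *ᵥ x ≤ x ⬝ᵥ ((1 + t) • A) *ᵥ x := by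
    intro x
    rw [Matrix.smul_mulVec, dotProduct_smul, smul_eq_mul]
    have h1 := (abs_le.mp (hP x)).2
    have h2 := mul_le_mul_of_nonneg_left (qA x) ht0
    rw [← mul_assoc, htlam] at h2
    nlinarith
  have hc1 : (0:ℝ) < 1 - t := by linarith
  have hc2 : (0:ℝ) < 1 + t := by linarith
  have hlowpd : ((1 - t) • A).PosDef := by
    refine PosDef.of_dotProduct_mulVec_pos ?_ fun x hx => ?_
    · rw [Matrix.IsHermitian, Matrix.conjTranspose_smul, hermA.eq]
      simp
    · rw [star_trivial, Matrix.smul_mulVec, dotProduct_smul, smul_eq_mul]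
      have := hApd.dotProduct_mulVec_pos hx
      rw [star_trivial] at this
      exact mul_pos hc1 this
  have hupherm : ((1 + t) • A).IsHermitian := by
    rw [Matrix.IsHermitian, Matrix.conjTranspose_smul, hermA.eq]
    simp
  have hd1 : ((1 - t) • A).det ≤ B.det := det_le_det_of_le hlowpd hermB hlow
  have hd2 : B.det ≤ ((1 + t) • A).det := det_le_det_of_le hBpd hupherm hup
  rw [Matrix.det_smul, hcard] at hd1
  rw [Matrix.det_smul, hcard] at hd2
  have hdA : 0 < A.det := hApd.det_pos
  have hdB : 0 < B.det := hBpd.det_pos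
  have hgoal : |Real.log B.det - Real.log A.det| ≤ -(m : ℝ) * Real.log (1 - t) := by
    have hlog1 : Real.log ((1 - t) ^ m * A.det)
        = (m : ℝ) * Real.log (1 - t) + Real.log A.det := by
      rw [Real.log_mul (by positivity) (ne_of_gt hdA), Real.log_pow]
    have hlog2 : Real.log ((1 + t) ^ m * A.det)
        = (m : ℝ) * Real.log (1 + t) + Real.log A.det := by
      rw [Real.log_mul (by positivity) (ne_of_gt hdA), Real.log_pow]
    have hub : Real.log B.det ≤ (m : ℝ) * Real.log (1 + t) + Real.log A.det := by
      rw [← hlog2]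
      exact (Real.log_le_log_iff hdB (by positivity)).mpr hd2
    have hlb : (m : ℝ) * Real.log (1 - t) + Real.log A.det ≤ Real.log B.det := by
      rw [← hlog1]
      exact (Real.log_le_log_iff (by positivity) hdB).mpr hd1
    have hkey : (m : ℝ) * Real.log (1 + t) ≤ -(m : ℝ) * Real.log (1 - t) := by
      have hsum : Real.log (1 + t) + Real.log (1 - t) ≤ 0 := by
        rw [← Real.log_mul (ne_of_gt hc2) (ne_of_gt hc1)]
        apply Real.log_nonpos (by nlinarith) (by nlinarith)
      nlinarith [Nat.cast_nonneg (α := ℝ) m]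
    rw [abs_le]
    constructor
    · linarith
    · linarith
  calc |Real.log B.det - Real.log A.det| ≤ -(m : ℝ) * Real.log (1 - t) := hgoal
    _ = -(m : ℝ) * Real.log (1 - ((m : ℝ) + 1 / (m : ℝ)) * eps / lam) := by rw [ht, hdel]
end

section
/- Let K and K̂ be E-by-E real symmetric matrices with K positive semidefinite, λ > 0, λ̂ ∈ ℝ, and fix m ≥ 1. Suppose every entry of K̂ − K has absolute value at most ε and |λ̂ − λ| ≤ ε/m, and set Δ = (m + 1/m)·ε with Δ < λ. Define F(S) = log det(K_S + λ I) and F̂(S) = log det(K̂_S + λ̂ I) on size-m subsets S of {1,...,E}. If Ŝ maximizes F̂ over size-m subsets and S* maximizes F over size-m subsets, then F(Ŝ) ≥ F(S*) − m · log((1 + Δ/λ)/(1 − Δ/λ)). -/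
open Matrix Finset

lemma aux_one_le_det_one_add {n : Type*} [Fintype n] [DecidableEq n]
    {P : Matrix n n ℝ} (hP : P.PosSemidef) : 1 ≤ (1 + P).det := by
  have h := hP.1
  set U : Matrix n n ℝ := (Matrix.IsHermitian.eigenvectorUnitary h : Matrix n n ℝ) with hUdef
  set D : Matrix n n ℝ := Matrix.diagonal (RCLike.ofReal ∘ h.eigenvalues) with hDdef
  have hU : U * star U = 1 :=
    Matrix.mem_unitaryGroup_iff.mp (Matrix.IsHermitian.eigenvectorUnitary h).2
  have hdiag : P = U * D * star U := h.spectral_theorem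
  have h1P : 1 + P = U * (1 + D) * star U := by
    rw [Matrix.mul_add, Matrix.add_mul, Matrix.mul_one, hU, ← hdiag]
  have hdet : (1 + P).det = (1 + D).det := by
    rw [h1P, Matrix.det_mul_right_comm, hU, Matrix.one_mul]
  rw [hdet, hDdef]
  have : (1 : Matrix n n ℝ) + Matrix.diagonal (RCLike.ofReal ∘ h.eigenvalues)
      = Matrix.diagonal (fun i => 1 + h.eigenvalues i) := by
    rw [← Matrix.diagonal_one, Matrix.diagonal_add]
    congr 1
  rw [this, Matrix.det_diagonal]
  calc (1:ℝ) = ∏ _i : n, 1 := by simp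
    _ ≤ ∏ i, (1 + h.eigenvalues i) := by
        refine Finset.prod_le_prod (fun i _ => by norm_num) (fun i _ => ?_)
        have h0 : 0 ≤ h.eigenvalues i := hP.eigenvalues_nonneg i
        linarith

open scoped MatrixOrder in
lemma aux_det_le_det_add {n : Type*} [Fintype n] [DecidableEq n]
    {A D : Matrix n n ℝ} (hA : A.PosDef) (hD : D.PosSemidef) :
    A.det ≤ (A + D).det := by
  set R := CFC.sqrt A with hRdef
  have hR : R.PosSemidef := (CFC.sqrt_nonneg A).posSemidef
  have hRR : R * R = A := CFC.sqrt_mul_sqrt_self A hA.posSemidef.nonneg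
  have hdetA : 0 < A.det := hA.det_pos
  have hdetR2 : R.det * R.det = A.det := by rw [← Matrix.det_mul, hRR]
  have hdetR : IsUnit R.det := by
    refine isUnit_iff_ne_zero.mpr fun h0 => ?_
    rw [h0, mul_zero] at hdetR2; linarith
  have hRinv : R * R⁻¹ = 1 := Matrix.mul_nonsing_inv R hdetR
  have hinv' : R⁻¹ * R = 1 := Matrix.nonsing_inv_mul R hdetR
  have hRinvH : (R⁻¹)ᴴ = R⁻¹ := hR.isHermitian.inv
  set M := R⁻¹ * D * R⁻¹ with hMdef
  have hM : M.PosSemidef := by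
    have := hD.conjTranspose_mul_mul_same (R⁻¹)
    rwa [hRinvH] at this
  have hRM : R * M * R = D := by
    rw [hMdef, ← Matrix.mul_assoc, ← Matrix.mul_assoc, hRinv, Matrix.one_mul,
      Matrix.mul_assoc, hinv', Matrix.mul_one]
  have key : A + D = R * (1 + M) * R := by
    rw [Matrix.mul_add, Matrix.mul_one, Matrix.add_mul, hRR, hRM]
  have h1 : 1 ≤ (1 + M).det := aux_one_le_det_one_add hM
  calc A.det = A.det * 1 := (mul_one _).symm
    _ ≤ A.det * (1 + M).det := by nlinarith
    _ = (A + D).det := by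
        rw [key, Matrix.det_mul, Matrix.det_mul]
        ring_nf
        nlinarith [hdetR2]

lemma aux_entry_posSemidef {n : Type*} [Fintype n] [DecidableEq n]
    {Q : Matrix n n ℝ} (hQ : Q.IsHermitian) {eps c : ℝ} (heps : 0 ≤ eps)
    (hent : ∀ i j, |Q i j| ≤ eps) (hc : (Fintype.card n : ℝ) * eps ≤ c) :
    (Q + c • (1 : Matrix n n ℝ)).PosSemidef := by
  rw [Matrix.posSemidef_iff_dotProduct_mulVec]
  constructor
  · rw [Matrix.IsHermitian, Matrix.conjTranspose_add, hQ.eq, Matrix.conjTranspose_smul,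
      Matrix.conjTranspose_one, star_trivial]
  · intro x
    have hx : star x = x := by funext i; simp
    rw [hx, Matrix.add_mulVec, dotProduct_add, Matrix.smul_mulVec,
      Matrix.one_mulVec, dotProduct_smul]
    have hquad : x ⬝ᵥ Q *ᵥ x = ∑ i, ∑ j, x i * Q i j * x j := by
      simp [dotProduct, Matrix.mulVec, Finset.mul_sum, mul_assoc, mul_comm, mul_left_comm]
    have habs : |∑ i, ∑ j, x i * Q i j * x j| ≤ eps * (∑ i, |x i|) ^ 2 := by
      calc |∑ i, ∑ j, x i * Q i j * x j| ≤ ∑ i, |∑ j, x i * Q i j * x j| :=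
            Finset.abs_sum_le_sum_abs _ _
        _ ≤ ∑ i, ∑ j, |x i * Q i j * x j| :=
            Finset.sum_le_sum fun i _ => Finset.abs_sum_le_sum_abs _ _
        _ ≤ ∑ i, ∑ j, |x i| * eps * |x j| := by
            refine Finset.sum_le_sum fun i _ => Finset.sum_le_sum fun j _ => ?_
            rw [abs_mul, abs_mul]
            have h1 : |x i| * |Q i j| ≤ |x i| * eps :=
              mul_le_mul_of_nonneg_left (hent i j) (abs_nonneg _)
            exact mul_le_mul_of_nonneg_right h1 (abs_nonneg _)
        _ = eps * (∑ i, |x i|) ^ 2 := by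
            rw [sq, Finset.sum_mul_sum, Finset.mul_sum]
            refine Finset.sum_congr rfl fun i _ => ?_
            rw [Finset.mul_sum]
            exact Finset.sum_congr rfl fun j _ => by ring
    have hcs : (∑ i, |x i|) ^ 2 ≤ (Fintype.card n : ℝ) * ∑ i, x i ^ 2 := by
      have := sq_sum_le_card_mul_sum_sq (s := (Finset.univ : Finset n)) (f := fun i => |x i|)
      simpa [sq_abs, Finset.card_univ] using this
    have hxx : x ⬝ᵥ x = ∑ i, x i ^ 2 := by
      simp [dotProduct, sq]
    have hsum_nonneg : (0:ℝ) ≤ ∑ i, x i ^ 2 := Finset.sum_nonneg fun i _ => sq_nonneg _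
    rw [hquad, hxx, smul_eq_mul]
    have h1 : -(eps * ((Fintype.card n : ℝ) * ∑ i, x i ^ 2)) ≤ ∑ i, ∑ j, x i * Q i j * x j := by
      have := neg_abs_le (∑ i, ∑ j, x i * Q i j * x j)
      have h2 : eps * (∑ i, |x i|) ^ 2 ≤ eps * ((Fintype.card n : ℝ) * ∑ i, x i ^ 2) :=
        mul_le_mul_of_nonneg_left hcs heps
      linarith
    nlinarith [mul_le_mul_of_nonneg_right hc hsum_nonneg]

lemma aux_smul_posDef {n : Type*} [Fintype n] [DecidableEq n]
    {c : ℝ} (hc : 0 < c) {M : Matrix n n ℝ} (hM : M.PosDef) : (c • M).PosDef := by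
  rw [Matrix.posDef_iff_dotProduct_mulVec]
  refine ⟨?_, fun x hx => ?_⟩
  · rw [Matrix.IsHermitian, Matrix.conjTranspose_smul, hM.1.eq, star_trivial]
  · rw [Matrix.smul_mulVec, dotProduct_smul, smul_eq_mul]
    exact mul_pos hc (hM.dotProduct_mulVec_pos hx)

lemma aux_smul_posSemidef {n : Type*} [Fintype n] [DecidableEq n]
    {c : ℝ} (hc : 0 ≤ c) {M : Matrix n n ℝ} (hM : M.PosSemidef) : (c • M).PosSemidef := by
  rw [Matrix.posSemidef_iff_dotProduct_mulVec]
  refine ⟨?_, fun x => ?_⟩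
  · rw [Matrix.IsHermitian, Matrix.conjTranspose_smul, hM.1.eq, star_trivial]
  · rw [Matrix.smul_mulVec, dotProduct_smul, smul_eq_mul]
    exact mul_nonneg hc (hM.dotProduct_mulVec_nonneg x)

lemma aux_key {E : ℕ} (K Kh : Matrix (Fin E) (Fin E) ℝ)
    (hK : K.PosSemidef) (hKh : Kh.IsSymm)
    (lam lamh eps : ℝ) (hlam : 0 < lam) (m : ℕ) (hm : 1 ≤ m) (heps : 0 ≤ eps)
    (hent : ∀ i j : Fin E, |Kh i j - K i j| ≤ eps)
    (hl : |lamh - lam| ≤ eps / (m : ℝ))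
    (hDelta : ((m : ℝ) + 1 / (m : ℝ)) * eps < lam)
    (S : Finset (Fin E)) (hS : S.card = m) :
    (1 - ((m : ℝ) + 1 / (m : ℝ)) * eps / lam) ^ m * (subK K S + lam • 1).det ≤
        (subK Kh S + lamh • 1).det ∧
      (subK Kh S + lamh • 1).det ≤
        (1 + ((m : ℝ) + 1 / (m : ℝ)) * eps / lam) ^ m * (subK K S + lam • 1).det ∧
      0 < (subK K S + lam • 1).det ∧ 0 < (subK Kh S + lamh • 1).det := by
  have hm0 : (0:ℝ) < m := by positivity
  set Δ : ℝ := ((m : ℝ) + 1 / (m : ℝ)) * eps with hΔdef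
  set t : ℝ := Δ / lam with htdef
  have hΔ0 : 0 ≤ Δ := by
    have : (0:ℝ) < (m : ℝ) + 1 / m := by positivity
    exact mul_nonneg this.le heps
  have ht0 : 0 ≤ t := div_nonneg hΔ0 hlam.le
  have ht1 : t < 1 := (div_lt_one hlam).mpr hDelta
  have hcard : (Fintype.card {x // x ∈ S} : ℝ) = (m : ℝ) := by
    rw [Fintype.card_coe, hS]
  have hKsym : K.IsHermitian := hK.1
  have hKhsym : Kh.IsHermitian := by
    rw [Matrix.IsHermitian]
    ext i j
    rw [Matrix.conjTranspose_apply, star_trivial]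
    exact congrFun (congrFun hKh i) j
  set KS := subK K S with hKSdef
  have hKS : KS.PosSemidef := hK.submatrix _
  set A := KS + lam • (1 : Matrix {x // x ∈ S} {x // x ∈ S} ℝ) with hAdef
  have hA : A.PosDef :=
    Matrix.PosDef.posSemidef_add hKS (aux_smul_posDef hlam Matrix.PosDef.one)
  have hid : (m:ℝ) * eps = Δ - eps / m := by rw [hΔdef]; ring
  have hlow := (abs_le.mp hl).1
  have hhigh := (abs_le.mp hl).2
  -- perturbation matrices
  set N := subK (Kh - K) S + (lamh - lam + Δ) • (1 : Matrix {x // x ∈ S} {x // x ∈ S} ℝ)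
    with hNdef
  set N' := subK (K - Kh) S + (lam + Δ - lamh) • (1 : Matrix {x // x ∈ S} {x // x ∈ S} ℝ)
    with hN'def
  have hN : N.PosSemidef := by
    refine aux_entry_posSemidef ((hKhsym.sub hKsym).submatrix _) heps
      (fun i j => hent i.1 j.1) ?_
    rw [hcard]; linarith
  have hN' : N'.PosSemidef := by
    refine aux_entry_posSemidef ((hKsym.sub hKhsym).submatrix _) heps
      (fun i j => by rw [← abs_neg]; simpa using hent i.1 j.1) ?_
    rw [hcard]; linarith
  have hsub1 : subK (Kh - K) S = subK Kh S - subK K S := by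
    simp [subK, Matrix.submatrix_sub]
  have hsub2 : subK (K - Kh) S = subK K S - subK Kh S := by
    simp [subK, Matrix.submatrix_sub]
  have hid1 : subK Kh S + lamh • 1 = (KS + (lam - Δ) • 1) + N := by
    rw [hNdef, hsub1, hKSdef]; module
  have hid2 : KS + (lam + Δ) • 1 = (subK Kh S + lamh • 1) + N' := by
    rw [hN'def, hsub2, hKSdef]; module
  set Bm := KS + (lam - Δ) • (1 : Matrix {x // x ∈ S} {x // x ∈ S} ℝ) with hBmdef
  have hBm : Bm.PosDef :=
    Matrix.PosDef.posSemidef_add hKS (aux_smul_posDef (by linarith) Matrix.PosDef.one)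
  have hAh : (subK Kh S + lamh • (1 : Matrix {x // x ∈ S} {x // x ∈ S} ℝ)).PosDef := by
    rw [hid1]; exact hBm.add_posSemidef hN
  have hlt : lam * t = Δ := by rw [htdef]; field_simp
  have hid3 : Bm = (1 - t) • A + t • KS := by
    rw [hBmdef, hAdef, show lam - Δ = (1 - t) * lam from by rw [← hlt]; ring]
    module
  have hid4 : (1 + t) • A = (KS + (lam + Δ) • 1) + t • KS := by
    rw [hAdef, show lam + Δ = (1 + t) * lam from by rw [← hlt]; ring]
    module
  have hsmulKS : (t • KS).PosSemidef := aux_smul_posSemidef ht0 hKS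
  have hAm : ((1 - t) • A).PosDef := aux_smul_posDef (by linarith) hA
  have d1 : ((1 - t) • A).det ≤ Bm.det := by
    rw [hid3]; exact aux_det_le_det_add hAm hsmulKS
  have d2 : Bm.det ≤ (subK Kh S + lamh • 1).det := by
    rw [hid1]; exact aux_det_le_det_add hBm hN
  have d3 : (subK Kh S + lamh • 1).det ≤ (KS + (lam + Δ) • 1).det := by
    rw [hid2]; exact aux_det_le_det_add hAh hN'
  have hBp : (KS + (lam + Δ) • (1 : Matrix {x // x ∈ S} {x // x ∈ S} ℝ)).PosDef :=
    Matrix.PosDef.posSemidef_add hKS (aux_smul_posDef (by linarith) Matrix.PosDef.one)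
  have d4 : (KS + (lam + Δ) • 1).det ≤ ((1 + t) • A).det := by
    rw [hid4]; exact aux_det_le_det_add hBp hsmulKS
  have hdet_smul_m : ∀ c : ℝ, (c • A).det = c ^ m * A.det := fun c => by
    rw [Matrix.det_smul, Fintype.card_coe, hS]
  refine ⟨?_, ?_, hA.det_pos, hAh.det_pos⟩
  · rw [← hdet_smul_m]; exact d1.trans d2
  · rw [← hdet_smul_m]; exact d3.trans d4

/-- **transfer bound for empirical subset selection.**  Let `K, K̂` be real
symmetric matrices with `K` positive semidefinite, `λ > 0`, `λ̂ ∈ ℝ`, `m ≥ 1`, every entry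
of `K̂ − K` at most `ε` in absolute value, `|λ̂ − λ| ≤ ε/m`, and `Δ = (m + 1/m)·ε < λ`.
Define `F(S) = log det(K_S + λI)` and `F̂(S) = log det(K̂_S + λ̂I)` on size-`m` subsets.
If `Ŝ` maximizes `F̂` and `S*` maximizes `F` over size-`m` subsets, then
`F(Ŝ) ≥ F(S*) − m·log((1 + Δ/λ)/(1 − Δ/λ))`. -/
theorem logdet_transfer {E : ℕ} (K Kh : Matrix (Fin E) (Fin E) ℝ)
    (hK : K.PosSemidef) (hKh : Kh.IsSymm)
    (lam lamh eps : ℝ) (hlam : 0 < lam) (m : ℕ) (hm : 1 ≤ m)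
    (hent : ∀ i j : Fin E, |Kh i j - K i j| ≤ eps)
    (hl : |lamh - lam| ≤ eps / (m : ℝ))
    (hDelta : ((m : ℝ) + 1 / (m : ℝ)) * eps < lam)
    (Shat Sstar : Finset (Fin E)) (hShat : Shat.card = m) (hSstar : Sstar.card = m)
    (hmaxhat : ∀ S : Finset (Fin E), S.card = m →
      Real.log (subK Kh S + lamh • 1).det ≤ Real.log (subK Kh Shat + lamh • 1).det)
    (hmaxstar : ∀ S : Finset (Fin E), S.card = m →
      Real.log (subK K S + lam • 1).det ≤ Real.log (subK K Sstar + lam • 1).det) :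
    Real.log (subK K Sstar + lam • 1).det -
        (m : ℝ) *
          Real.log ((1 + ((m : ℝ) + 1 / (m : ℝ)) * eps / lam) /
            (1 - ((m : ℝ) + 1 / (m : ℝ)) * eps / lam)) ≤
      Real.log (subK K Shat + lam • 1).det := by
  have hm0 : (0:ℝ) < m := by positivity
  have heps : 0 ≤ eps := by
    obtain ⟨i, hi⟩ := Finset.card_pos.mp (show 0 < Shat.card by omega)
    exact (abs_nonneg _).trans (hent i i)
  obtain ⟨lo1, hi1, pos1, posh1⟩ :=
    aux_key K Kh hK hKh lam lamh eps hlam m hm heps hent hl hDelta Shat hShat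
  obtain ⟨lo2, hi2, pos2, posh2⟩ :=
    aux_key K Kh hK hKh lam lamh eps hlam m hm heps hent hl hDelta Sstar hSstar
  set t : ℝ := ((m:ℝ) + 1 / (m:ℝ)) * eps / lam with htdef
  have ht0 : 0 ≤ t := by
    have : (0:ℝ) < (m : ℝ) + 1 / m := by positivity
    exact div_nonneg (mul_nonneg this.le heps) hlam.le
  have ht1 : t < 1 := (div_lt_one hlam).mpr hDelta
  have h1tm : 0 < 1 - t := by linarith
  have h1tp : 0 < 1 + t := by linarith
  -- upper bound for Shat
  have U1 : Real.log (subK Kh Shat + lamh • 1).det ≤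
      (m : ℝ) * Real.log (1 + t) + Real.log (subK K Shat + lam • 1).det := by
    have h := (Real.log_le_log_iff posh1 (mul_pos (pow_pos h1tp m) pos1)).mpr hi1
    rwa [Real.log_mul (pow_pos h1tp m).ne' pos1.ne', Real.log_pow] at h
  -- lower bound for Sstar
  have L2 : (m : ℝ) * Real.log (1 - t) + Real.log (subK K Sstar + lam • 1).det ≤
      Real.log (subK Kh Sstar + lamh • 1).det := by
    have h := (Real.log_le_log_iff (mul_pos (pow_pos h1tm m) pos2) posh2).mpr lo2
    rwa [Real.log_mul (pow_pos h1tm m).ne' pos2.ne', Real.log_pow] at h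
  have hmax := hmaxhat Sstar hSstar
  have hlogdiv : Real.log ((1 + t) / (1 - t)) =
      Real.log (1 + t) - Real.log (1 - t) := Real.log_div h1tp.ne' h1tm.ne'
  rw [hlogdiv]
  linarith
end

section
/- Let M, M̂, ρ, ρ̂, τ, σ_min, B_f satisfy: M_ii ≥ σ_min² > 0 and M_jj ≥ σ_min², |M_ij| ≤ B_f², |M̂_ii − M_ii| ≤ τ, |M̂_jj − M_jj| ≤ τ, |M̂_ij − M_ij| ≤ τ, and 0 < τ ≤ σ_min²/2, where ρ = M_ij/√(M_ii M_jj) and ρ̂ = M̂_ij/√(M̂_ii M̂_jj). Then M̂_ii, M̂_jj ≥ σ_min²/2 > 0 and |ρ̂ − ρ| ≤ C_oc · τ with C_oc = 2/σ_min² + 4 B_f²/σ_min⁴. -/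
set_option maxHeartbeats 1000000

private lemma inv_diff_key (x y : ℝ) (hx : 0 < x) (hy : 0 < y) :
    |1/y - 1/x| * (x^2*y) ≤ |x^2 - y^2| := by
  have h0 : (1/y - 1/x) * (x^2*y) = (x - y) * x := by field_simp
  have h1 : |1/y - 1/x| * (x^2*y) = |x - y| * x := by
    rw [← abs_of_pos (show (0:ℝ) < x^2*y by positivity), ← abs_mul, h0,
      abs_mul, abs_of_pos hx]
  rw [h1]
  have h2 : |x^2 - y^2| = |x - y| * (x + y) := by
    rw [← abs_of_pos (show (0:ℝ) < x + y by positivity), ← abs_mul]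
    congr 1; ring
  rw [h2]
  have := abs_nonneg (x - y)
  nlinarith

/-- **cosine-similarity stability.**  If `M_ii, M_jj ≥ σ_min² > 0`,
`|M_ij| ≤ B_f²`, the hatted quantities satisfy `|M̂_ii − M_ii| ≤ τ`, `|M̂_jj − M_jj| ≤ τ`,
`|M̂_ij − M_ij| ≤ τ` with `0 < τ ≤ σ_min²/2`, then `M̂_ii, M̂_jj ≥ σ_min²/2 > 0` and the
cosine similarities `ρ = M_ij/√(M_ii M_jj)`, `ρ̂ = M̂_ij/√(M̂_ii M̂_jj)` satisfy
`|ρ̂ − ρ| ≤ C_oc·τ` with `C_oc = 2/σ_min² + 4B_f²/σ_min⁴`. -/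
theorem cosine_stability (Mii Mjj Mij Nii Njj Nij τ σmin Bf : ℝ)
    (hσ : 0 < σmin ^ 2)
    (hii : σmin ^ 2 ≤ Mii) (hjj : σmin ^ 2 ≤ Mjj) (hij : |Mij| ≤ Bf ^ 2)
    (eii : |Nii - Mii| ≤ τ) (ejj : |Njj - Mjj| ≤ τ) (eij : |Nij - Mij| ≤ τ)
    (hτ0 : 0 < τ) (hτ : τ ≤ σmin ^ 2 / 2) :
    σmin ^ 2 / 2 ≤ Nii ∧ σmin ^ 2 / 2 ≤ Njj ∧ 0 < σmin ^ 2 / 2 ∧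
      |Nij / Real.sqrt (Nii * Njj) - Mij / Real.sqrt (Mii * Mjj)| ≤
        (2 / σmin ^ 2 + 4 * Bf ^ 2 / σmin ^ 4) * τ := by
  obtain ⟨e1, e2⟩ := abs_le.mp eii
  obtain ⟨f1, f2⟩ := abs_le.mp ejj
  have hNii : σmin ^ 2 / 2 ≤ Nii := by linarith
  have hNjj : σmin ^ 2 / 2 ≤ Njj := by linarith
  refine ⟨hNii, hNjj, by linarith, ?_⟩
  set s := σmin ^ 2 with hsdef
  have hMiipos : 0 < Mii := lt_of_lt_of_le hσ hii
  have hMjjpos : 0 < Mjj := lt_of_lt_of_le hσ hjj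
  have hNiipos : 0 < Nii := lt_of_lt_of_le (by linarith) hNii
  have hNjjpos : 0 < Njj := lt_of_lt_of_le (by linarith) hNjj
  set sa := Real.sqrt Mii with hsa
  set sb := Real.sqrt Mjj with hsb
  set ta := Real.sqrt Nii with hta
  set tb := Real.sqrt Njj with htb
  have hsa0 : 0 < sa := Real.sqrt_pos.mpr hMiipos
  have hsb0 : 0 < sb := Real.sqrt_pos.mpr hMjjpos
  have hta0 : 0 < ta := Real.sqrt_pos.mpr hNiipos
  have htb0 : 0 < tb := Real.sqrt_pos.mpr hNjjpos
  have hsa2 : sa ^ 2 = Mii := Real.sq_sqrt hMiipos.le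
  have hsb2 : sb ^ 2 = Mjj := Real.sq_sqrt hMjjpos.le
  have hta2 : ta ^ 2 = Nii := Real.sq_sqrt hNiipos.le
  have htb2 : tb ^ 2 = Njj := Real.sq_sqrt hNjjpos.le
  -- product lower bounds
  have htab : s / 2 ≤ ta * tb := by
    nlinarith [sq_nonneg (ta*tb - s/2), mul_pos hta0 htb0]
  have hsbta : s / 2 ≤ sb * ta := by
    nlinarith [mul_pos hsb0 hta0]
  -- rewrite sqrt of products
  rw [Real.sqrt_mul hNiipos.le, Real.sqrt_mul hMiipos.le, ← hta, ← htb, ← hsa, ← hsb]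
  -- decomposition
  have decomp : Nij / (ta*tb) - Mij / (sa*sb)
      = (Nij - Mij) * (1/(ta*tb))
        + Mij * ((1/ta) * (1/tb - 1/sb) + (1/sb) * (1/ta - 1/sa)) := by
    field_simp
    ring
  rw [decomp]
  have key1 : |1/tb - 1/sb| ≤ τ / (sb^2 * tb) := by
    rw [le_div_iff₀ (by positivity)]
    calc |1/tb - 1/sb| * (sb^2*tb) ≤ |sb^2 - tb^2| := inv_diff_key sb tb hsb0 htb0
      _ = |Mjj - Njj| := by rw [hsb2, htb2]
      _ ≤ τ := by rw [abs_sub_comm]; exact ejj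
  have key2 : |1/ta - 1/sa| ≤ τ / (sa^2 * ta) := by
    rw [le_div_iff₀ (by positivity)]
    calc |1/ta - 1/sa| * (sa^2*ta) ≤ |sa^2 - ta^2| := inv_diff_key sa ta hsa0 hta0
      _ = |Mii - Nii| := by rw [hsa2, hta2]
      _ ≤ τ := by rw [abs_sub_comm]; exact eii
  have b1 : |(Nij - Mij) * (1/(ta*tb))| ≤ τ * (2/s) := by
    rw [abs_mul, abs_of_pos (show (0:ℝ) < 1/(ta*tb) by positivity)]
    apply mul_le_mul eij ?_ (by positivity) hτ0.le
    rw [div_le_div_iff₀ (by positivity) hσ]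
    nlinarith
  have b2 : (1/ta) * |1/tb - 1/sb| ≤ 2 * τ / s^2 := by
    calc (1/ta) * |1/tb - 1/sb| ≤ (1/ta) * (τ / (sb^2*tb)) := by
          apply mul_le_mul_of_nonneg_left key1 (by positivity)
      _ = τ / (ta * (sb^2 * tb)) := by field_simp
      _ ≤ 2 * τ / s^2 := by
          rw [div_le_div_iff₀ (by positivity) (by positivity), hsb2]
          have h : (s/2) * s ≤ ta * tb * Mjj :=
            mul_le_mul htab hjj hσ.le (by positivity)
          nlinarith [mul_le_mul_of_nonneg_left h hτ0.le]
  have b3 : (1/sb) * |1/ta - 1/sa| ≤ 2 * τ / s^2 := by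
    calc (1/sb) * |1/ta - 1/sa| ≤ (1/sb) * (τ / (sa^2*ta)) := by
          apply mul_le_mul_of_nonneg_left key2 (by positivity)
      _ = τ / (sb * (sa^2 * ta)) := by field_simp
      _ ≤ 2 * τ / s^2 := by
          rw [div_le_div_iff₀ (by positivity) (by positivity), hsa2]
          have h : (s/2) * s ≤ sb * ta * Mii :=
            mul_le_mul hsbta hii hσ.le (by positivity)
          nlinarith [mul_le_mul_of_nonneg_left h hτ0.le]
  have hBf : 0 ≤ Bf ^ 2 := le_trans (abs_nonneg _) hij
  calc |(Nij - Mij) * (1/(ta*tb))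
        + Mij * ((1/ta) * (1/tb - 1/sb) + (1/sb) * (1/ta - 1/sa))|
      ≤ |(Nij - Mij) * (1/(ta*tb))|
        + |Mij| * ((1/ta) * |1/tb - 1/sb| + (1/sb) * |1/ta - 1/sa|) := by
        have hY : |Mij * ((1/ta) * (1/tb - 1/sb) + (1/sb) * (1/ta - 1/sa))|
            ≤ |Mij| * ((1/ta) * |1/tb - 1/sb| + (1/sb) * |1/ta - 1/sa|) := by
          rw [abs_mul]
          refine mul_le_mul_of_nonneg_left ?_ (abs_nonneg _)
          refine le_trans (abs_add_le _ _) ?_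
          rw [abs_mul, abs_mul,
            abs_of_pos (show (0:ℝ) < 1/ta by positivity),
            abs_of_pos (show (0:ℝ) < 1/sb by positivity)]
        exact le_trans (abs_add_le _ _) (by linarith)
    _ ≤ τ * (2/s) + Bf^2 * (2*τ/s^2 + 2*τ/s^2) := by
        have hBf0 : 0 ≤ Bf ^ 2 := le_trans (abs_nonneg _) hij
        have h2 : |Mij| * ((1/ta) * |1/tb - 1/sb| + (1/sb) * |1/ta - 1/sa|)
            ≤ Bf^2 * (2*τ/s^2 + 2*τ/s^2) :=
          mul_le_mul hij (add_le_add b2 b3) (by positivity) hBf0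
        linarith
    _ ≤ (2 / s + 4 * Bf ^ 2 / σmin ^ 4) * τ := by
        have : σmin ^ 4 = s^2 := by rw [hsdef]; ring
        rw [this]
        rw [div_add_div _ _ (ne_of_gt hσ) (by positivity), div_mul_eq_mul_div, le_div_iff₀ (by positivity)]
        field_simp
        ring_nf
        nlinarith [sq_nonneg s, mul_pos hσ hτ0]
end

section
/- Let S be a finite set, d : S × S → ℝ a symmetric dissimilarity, and P* = {G*_1, ..., G*_G} a partition of S into G nonempty groups such that max over g and over i, j in G*_g of d(i, j) ≤ Δ_in < Δ_out ≤ min over g ≠ h, i ∈ G*_g, j ∈ G*_h of d(i, j). Then average-linkage agglomerative clustering — starting from the partition of S into singletons and repeatedly merging the pair of clusters C, C' minimizing d_avg(C, C') = (1/(|C||C'|)) Σ_{i∈C} Σ_{j∈C'} d(i, j), stopping when exactly G clusters remain — returns exactly the partition P* (up to relabeling of groups). -/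
open Finset

/-- Average-linkage distance between two clusters:
`d_avg(C, C') = (1/(|C||C'|)) Σ_{i∈C} Σ_{j∈C'} d(i, j)`. -/
noncomputable def davg {ι : Type*} (d : ι → ι → ℝ) (C C' : Finset ι) : ℝ :=
  (∑ i ∈ C, ∑ j ∈ C', d i j) / ((C.card : ℝ) * (C'.card : ℝ))

lemma davg_le_of_forall {ι : Type*} (d : ι → ι → ℝ) {C C' : Finset ι}
    (hC : C.Nonempty) (hC' : C'.Nonempty) {a : ℝ}
    (h : ∀ i ∈ C, ∀ j ∈ C', d i j ≤ a) : davg d C C' ≤ a := by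
  have hpos : (0 : ℝ) < (C.card : ℝ) * (C'.card : ℝ) :=
    mul_pos (by exact_mod_cast hC.card_pos) (by exact_mod_cast hC'.card_pos)
  rw [davg, div_le_iff₀ hpos]
  calc ∑ i ∈ C, ∑ j ∈ C', d i j
      ≤ ∑ i ∈ C, ∑ j ∈ C', a :=
        Finset.sum_le_sum fun i hi => Finset.sum_le_sum fun j hj => h i hi j hj
    _ = a * ((C.card : ℝ) * (C'.card : ℝ)) := by
        simp [Finset.sum_const, nsmul_eq_mul]; ring

lemma le_davg_of_forall {ι : Type*} (d : ι → ι → ℝ) {C C' : Finset ι}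
    (hC : C.Nonempty) (hC' : C'.Nonempty) {a : ℝ}
    (h : ∀ i ∈ C, ∀ j ∈ C', a ≤ d i j) : a ≤ davg d C C' := by
  have hpos : (0 : ℝ) < (C.card : ℝ) * (C'.card : ℝ) :=
    mul_pos (by exact_mod_cast hC.card_pos) (by exact_mod_cast hC'.card_pos)
  rw [davg, le_div_iff₀ hpos]
  calc a * ((C.card : ℝ) * (C'.card : ℝ))
      = ∑ _i ∈ C, ∑ _j ∈ C', a := by simp [Finset.sum_const, nsmul_eq_mul]; ring
    _ ≤ ∑ i ∈ C, ∑ j ∈ C', d i j :=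
        Finset.sum_le_sum fun i hi => Finset.sum_le_sum fun j hj => h i hi j hj

/-- **exact recovery of average-linkage clustering.**
Let `S` be a finite set (here the fintype `ι`), `d` a symmetric dissimilarity, and `P*`
a partition of `S` into `G` nonempty groups with all within-group dissimilarities
`≤ Δ_in < Δ_out ≤` all between-group dissimilarities.  Then average-linkage agglomerative
clustering — starting from the partition into singletons and repeatedly merging a pair of
distinct clusters minimizing `d_avg`, stopping when exactly `G` clusters remain — returns
exactly the partition `P*`. -/
theorem average_linkage_exact_recovery {ι : Type*} [Fintype ι] [DecidableEq ι]
    (d : ι → ι → ℝ) (hsym : ∀ i j, d i j = d j i)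
    (G : ℕ) (Pstar : Finset (Finset ι)) (hPcard : Pstar.card = G)
    (hPne : ∀ C ∈ Pstar, C.Nonempty)
    (hPdisj : ∀ C ∈ Pstar, ∀ C' ∈ Pstar, C ≠ C' → Disjoint C C')
    (hPcover : ∀ i : ι, ∃ C ∈ Pstar, i ∈ C)
    (Δin Δout : ℝ) (hΔ : Δin < Δout)
    (hin : ∀ C ∈ Pstar, ∀ i ∈ C, ∀ j ∈ C, d i j ≤ Δin)
    (hout : ∀ C ∈ Pstar, ∀ C' ∈ Pstar, C ≠ C' → ∀ i ∈ C, ∀ j ∈ C', Δout ≤ d i j)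
    (seq : ℕ → Finset (Finset ι))
    (h0 : seq 0 = Finset.univ.image fun i : ι => ({i} : Finset ι))
    (N : ℕ)
    (hstep : ∀ n < N, ∃ C ∈ seq n, ∃ C' ∈ seq n, C ≠ C' ∧
      (∀ D ∈ seq n, ∀ D' ∈ seq n, D ≠ D' → davg d C C' ≤ davg d D D') ∧
      seq (n + 1) = insert (C ∪ C') (((seq n).erase C).erase C'))
    (hstop : (seq N).card = G) :
    seq N = Pstar := by
  classical
  -- uniqueness of the containing group
  have huniq : ∀ C : Finset ι, C.Nonempty → ∀ P ∈ Pstar, ∀ P' ∈ Pstar,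
      C ⊆ P → C ⊆ P' → P = P' := by
    intro C hC P hP P' hP' h1 h2
    by_contra hne
    obtain ⟨i, hi⟩ := hC
    exact (Finset.disjoint_left.mp (hPdisj P hP P' hP' hne) (h1 hi)) (h2 hi)
  -- choice of containing group
  set f : Finset ι → Finset ι :=
    fun C => if h : ∃ P ∈ Pstar, C ⊆ P then h.choose else ∅ with hfdef
  have hf : ∀ C : Finset ι, (∃ P ∈ Pstar, C ⊆ P) → f C ∈ Pstar ∧ C ⊆ f C := by
    intro C h
    simp only [hfdef, dif_pos h]
    exact ⟨h.choose_spec.1, h.choose_spec.2⟩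
  -- Part A: cardinality lower bound along the run
  have hone : ∀ n < N, (seq (n + 1)).card + 1 ≤ (seq n).card := by
    intro n hn
    obtain ⟨C, hC, C', hC', hne, _, heq⟩ := hstep n hn
    have h2 : 2 ≤ (seq n).card :=
      Finset.one_lt_card.mpr ⟨C, hC, C', hC', hne⟩
    have hC'e : C' ∈ (seq n).erase C := Finset.mem_erase.mpr ⟨hne.symm, hC'⟩
    have hcc : (((seq n).erase C).erase C').card = (seq n).card - 2 := by
      rw [Finset.card_erase_of_mem hC'e, Finset.card_erase_of_mem hC]; omega
    have := Finset.card_insert_le (C ∪ C') (((seq n).erase C).erase C')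
    rw [heq]
    omega
  have hcardge : ∀ k ≤ N, G + k ≤ (seq (N - k)).card := by
    intro k
    induction k with
    | zero => intro _; simpa using hstop.ge
    | succ k ih =>
      intro hk
      have h1 := ih (by omega)
      have h2 := hone (N - (k + 1)) (by omega)
      have h3 : N - (k + 1) + 1 = N - k := by omega
      rw [h3] at h2
      omega
  have hcardgt : ∀ n < N, G < (seq n).card := by
    intro n hn
    have := hcardge (N - n) (by omega)
    have h3 : N - (N - n) = n := by omega
    rw [h3] at this
    omega
  -- Part B: invariant
  have hInv : ∀ n ≤ N,
      (∀ C ∈ seq n, C.Nonempty) ∧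
      (∀ C ∈ seq n, ∀ C' ∈ seq n, C ≠ C' → Disjoint C C') ∧
      (∀ i : ι, ∃ C ∈ seq n, i ∈ C) ∧
      (∀ C ∈ seq n, ∃ P ∈ Pstar, C ⊆ P) := by
    intro n
    induction n with
    | zero =>
      intro _
      refine ⟨?_, ?_, ?_, ?_⟩
      · intro C hC
        rw [h0] at hC
        obtain ⟨i, _, rfl⟩ := Finset.mem_image.mp hC
        exact Finset.singleton_nonempty i
      · intro C hC C' hC' hne
        rw [h0] at hC hC'
        obtain ⟨i, _, rfl⟩ := Finset.mem_image.mp hC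
        obtain ⟨j, _, rfl⟩ := Finset.mem_image.mp hC'
        simp only [Finset.disjoint_singleton_left, Finset.mem_singleton]
        intro h; exact hne (by rw [h])
      · intro i
        exact ⟨{i}, by rw [h0]; exact Finset.mem_image_of_mem _ (Finset.mem_univ i),
          Finset.mem_singleton_self i⟩
      · intro C hC
        rw [h0] at hC
        obtain ⟨i, _, rfl⟩ := Finset.mem_image.mp hC
        obtain ⟨P, hP, hiP⟩ := hPcover i
        exact ⟨P, hP, Finset.singleton_subset_iff.mpr hiP⟩
    | succ n ih =>
      intro hsn
      have hn : n < N := by omega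
      obtain ⟨hNe, hDisj, hCov, hRef⟩ := ih (by omega)
      obtain ⟨C, hC, C', hC', hne, hmin, heq⟩ := hstep n hn
      obtain ⟨P, hP, hCP⟩ := hRef C hC
      obtain ⟨P', hP', hC'P⟩ := hRef C' hC'
      -- the merged pair lies in the same group
      have hPP' : P = P' := by
        by_contra hnePP
        -- pigeonhole: some group holds two distinct current clusters
        have hpig : ∃ D ∈ seq n, ∃ D' ∈ seq n, D ≠ D' ∧
            ∃ Q ∈ Pstar, D ⊆ Q ∧ D' ⊆ Q := by
          by_contra hno
          push_neg at hno
          have hinj : Set.InjOn f (seq n) := by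
            intro D hD D' hD' hfe
            by_contra hDD'
            obtain ⟨hQ, hDQ⟩ := hf D (hRef D hD)
            obtain ⟨hQ', hD'Q⟩ := hf D' (hRef D' hD')
            exact hno D hD D' hD' hDD' (f D) hQ hDQ (hfe ▸ hD'Q)
          have hmapsto : ∀ D ∈ seq n, f D ∈ Pstar := fun D hD => (hf D (hRef D hD)).1
          have := Finset.card_le_card_of_injOn f hmapsto hinj
          have := hcardgt n hn
          omega
        obtain ⟨D, hD, D', hD', hDD', Q, hQ, hDQ, hD'Q⟩ := hpig
        have h1 : davg d D D' ≤ Δin :=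
          davg_le_of_forall d (hNe D hD) (hNe D' hD')
            (fun i hi j hj => hin Q hQ i (hDQ hi) j (hD'Q hj))
        have h2 : Δout ≤ davg d C C' :=
          le_davg_of_forall d (hNe C hC) (hNe C' hC')
            (fun i hi j hj => hout P hP P' hP' hnePP i (hCP hi) j (hC'P hj))
        have h3 := hmin D hD D' hD' hDD'
        linarith
      have hUP : C ∪ C' ⊆ P := Finset.union_subset hCP (hPP' ▸ hC'P)
      have hmem : ∀ D, D ∈ seq (n + 1) ↔
          D = C ∪ C' ∨ (D ∈ seq n ∧ D ≠ C ∧ D ≠ C') := by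
        intro D
        rw [heq]
        simp only [Finset.mem_insert, Finset.mem_erase]
        tauto
      refine ⟨?_, ?_, ?_, ?_⟩
      · intro D hD
        rcases (hmem D).mp hD with rfl | ⟨hD, _, _⟩
        · exact (hNe C hC).mono Finset.subset_union_left
        · exact hNe D hD
      · intro D hD D' hD' hDD'
        rcases (hmem D).mp hD with rfl | ⟨hDo, hDC, hDC'⟩ <;>
          rcases (hmem D').mp hD' with h' | ⟨hD'o, hD'C, hD'C'⟩
        · exact absurd h'.symm hDD'
        · exact Finset.disjoint_union_left.mpr
            ⟨hDisj C hC D' hD'o (Ne.symm hD'C), hDisj C' hC' D' hD'o (Ne.symm hD'C')⟩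
        · subst h'
          exact (Finset.disjoint_union_left.mpr
            ⟨hDisj C hC D hDo (Ne.symm hDC), hDisj C' hC' D hDo (Ne.symm hDC')⟩).symm
        · exact hDisj D hDo D' hD'o hDD'
      · intro i
        obtain ⟨D, hD, hiD⟩ := hCov i
        by_cases h1 : D = C
        · exact ⟨C ∪ C', (hmem _).mpr (Or.inl rfl),
            Finset.mem_union_left _ (h1 ▸ hiD)⟩
        by_cases h2 : D = C'
        · exact ⟨C ∪ C', (hmem _).mpr (Or.inl rfl),
            Finset.mem_union_right _ (h2 ▸ hiD)⟩
        · exact ⟨D, (hmem _).mpr (Or.inr ⟨hD, h1, h2⟩), hiD⟩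
      · intro D hD
        rcases (hmem D).mp hD with rfl | ⟨hDo, _, _⟩
        · exact ⟨P, hP, hUP⟩
        · exact hRef D hDo
  -- Part C: conclusion
  obtain ⟨hNe, hDisj, hCov, hRef⟩ := hInv N le_rfl
  have himg : Pstar ⊆ (seq N).image f := by
    intro P hP
    obtain ⟨i, hi⟩ := hPne P hP
    obtain ⟨D, hD, hiD⟩ := hCov i
    obtain ⟨hfD, hDfD⟩ := hf D (hRef D hD)
    have hPfD : P = f D := by
      by_contra hne
      exact (Finset.disjoint_left.mp (hPdisj P hP (f D) hfD hne) hi) (hDfD hiD)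
    rw [hPfD]
    exact Finset.mem_image_of_mem f hD
  have hcards : ((seq N).image f).card = (seq N).card := by
    have h1 := Finset.card_image_le (s := seq N) (f := f)
    have h2 := Finset.card_le_card himg
    omega
  have hinj : Set.InjOn f (seq N) := Finset.injOn_of_card_image_eq hcards
  have hsub : seq N ⊆ Pstar := by
    intro Cc hCc
    obtain ⟨hfC, hCfC⟩ := hf Cc (hRef Cc hCc)
    suffices h : Cc = f Cc by rw [h]; exact hfC
    refine Finset.Subset.antisymm hCfC ?_
    intro j hj
    obtain ⟨D, hD, hjD⟩ := hCov j
    obtain ⟨hfD, hDfD⟩ := hf D (hRef D hD)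
    have hfe : f D = f Cc := by
      by_contra hne
      exact (Finset.disjoint_left.mp (hPdisj (f D) hfD (f Cc) hfC hne) (hDfD hjD)) hj
    have : D = Cc := hinj hD hCc hfe
    exact this ▸ hjD
  exact Finset.eq_of_subset_of_card_le hsub (by rw [hstop, hPcard])
end
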